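/- arXiv:math/0404245 — 3 statements merged into one kernel-verified Lean document; each statement's English description precedes it below -/
import Mathlib

section
/- Let x = (x1,x2,x3,x4) ∈ ℤ⁴ satisfy gcd(x1,x2,x3,x4) = 1, x1·x2·x3·x4 ≠ 0, and x1·x2·x3 = x4·(x1+x2+x3)². Then there exist a sign ε ∈ {1,−1}, positive integers s0, s1, s2, s3, u1, u2, u3 and nonzero integers y1, y2, y3 with gcd(y1,y2,y3) = 1 such that: ε·s0·s1·s2·s3·u1·u2·u3 = y1·u1·s1² + y2·u2·s2² + y3·u3·s3²; u1·u2·u3 is squarefree; gcd(s_i,s_j) = 1 and gcd(s_i,u_j) = 1 for all i ≠ j in {1,2,3}; gcd(s0,y_i) = 1 for all i; gcd(s_i,y_j) = 1 for all i ≠ j; gcd(u_i, y1·y2·y3) = 1 for all i; and x_i = y_i·u_i²·u_j·u_k·s0²·s_i² for each permutation {i,j,k} of {1,2,3}, while x4 = y1·y2·y3. -/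
set_option maxHeartbeats 4000000

private lemma coprime_of_prime_fact {a b : ℕ}
    (h : ∀ p : ℕ, p.Prime → p ∣ a → p ∣ b → False) : Nat.Coprime a b := by
  by_contra hab
  have hp := Nat.minFac_prime hab
  exact h _ hp ((Nat.minFac_dvd _).trans (Nat.gcd_dvd_left a b))
    ((Nat.minFac_dvd _).trans (Nat.gcd_dvd_right a b))

private lemma eq_of_fact_eq {a b : ℕ} (ha : a ≠ 0) (hb : b ≠ 0)
    (h : ∀ p : ℕ, p.Prime → a.factorization p = b.factorization p) : a = b :=
  Nat.factorization_inj ha hb (Finsupp.ext fun p => by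
    by_cases hp : p.Prime
    · exact h p hp
    · simp [Nat.factorization_eq_zero_of_not_prime _ hp])

private lemma fact_min3_le {p : ℕ} (hp : p.Prime) {a b c d : ℤ}
    (hd : d ≠ 0) (h : d = a + b + c) :
    min (a.natAbs.factorization p) (min (b.natAbs.factorization p) (c.natAbs.factorization p))
      ≤ d.natAbs.factorization p := by
  set k := min (a.natAbs.factorization p) (min (b.natAbs.factorization p)
    (c.natAbs.factorization p)) with hk
  have key : ∀ z : ℤ, k ≤ z.natAbs.factorization p → (p : ℤ) ^ k ∣ z := by
    intro z hz
    rcases eq_or_ne z 0 with rfl | hz0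
    · exact dvd_zero _
    · have h1 : p ^ k ∣ z.natAbs :=
        (hp.pow_dvd_iff_le_factorization (Int.natAbs_ne_zero.mpr hz0)).mpr hz
      have h2 : ((p ^ k : ℕ) : ℤ) ∣ (z.natAbs : ℤ) := Int.natCast_dvd_natCast.mpr h1
      have h3 : ((p ^ k : ℕ) : ℤ) ∣ z := Int.dvd_natAbs.mp h2
      simpa using h3
  have hdvd : (p : ℤ) ^ k ∣ d := by
    rw [h]
    exact dvd_add (dvd_add (key a (min_le_left _ _))
      (key b (le_trans (min_le_right _ _) (min_le_left _ _))))
      (key c (le_trans (min_le_right _ _) (min_le_right _ _)))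
  have h4 : ((p ^ k : ℕ) : ℤ) ∣ (d.natAbs : ℤ) := Int.dvd_natAbs.mpr (by simpa using hdvd)
  have h5 : p ^ k ∣ d.natAbs := Int.natCast_dvd_natCast.mp h4
  exact (hp.pow_dvd_iff_le_factorization (Int.natAbs_ne_zero.mpr hd)).mp h5

private lemma key1 (e1 e2 e3 e4 ec : ℕ)
    (hsum : e1 + e2 + e3 = e4 + 2 * ec)
    (hprim : ¬(0 < e1 ∧ 0 < e2 ∧ 0 < e3 ∧ 0 < e4))
    (h1 : min ec (min e2 e3) ≤ e1)
    (h2 : min ec (min e1 e3) ≤ e2)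
    (h3 : min ec (min e1 e2) ≤ e3) :
    min e1 e4 + min e2 e4 + min e3 e4 = e4 := by omega

private lemma keyB (e1 e2 e3 e4 ec a1 a2 a3 : ℕ)
    (hsum : e1 + e2 + e3 = e4 + 2 * ec)
    (hprim : ¬(0 < e1 ∧ 0 < e2 ∧ 0 < e3 ∧ 0 < e4))
    (h1 : min ec (min e2 e3) ≤ e1)
    (h2 : min ec (min e1 e3) ≤ e2)
    (h3 : min ec (min e1 e2) ≤ e3)
    (ha1 : a1 = e1 - min e1 e4)
    (ha2 : a2 = e2 - min e2 e4)
    (ha3 : a3 = e3 - min e3 e4) :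
    e4 = 0 ∨
    (e2 = 0 ∧ e3 = 0 ∧ a1 = 2 * ec ∧ a2 = 0 ∧ a3 = 0) ∨
    (e1 = 0 ∧ e3 = 0 ∧ a2 = 2 * ec ∧ a1 = 0 ∧ a3 = 0) ∨
    (e1 = 0 ∧ e2 = 0 ∧ a3 = 2 * ec ∧ a1 = 0 ∧ a2 = 0) ∨
    (ec = 0 ∧ a1 = 0 ∧ a2 = 0 ∧ a3 = 0) := by
  rcases Nat.eq_zero_or_pos e4 with h4 | h4
  · exact Or.inl h4
  rcases Nat.eq_zero_or_pos e1 with z1 | p1 <;>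
    rcases Nat.eq_zero_or_pos e2 with z2 | p2 <;>
    rcases Nat.eq_zero_or_pos e3 with z3 | p3
  · clear h1 h2 h3; omega
  · clear h1 h2 h3; omega
  · clear h1 h2 h3; omega
  · clear h2 h3; omega
  · clear h1 h2 h3; omega
  · clear h1 h3; omega
  · clear h1 h2; omega
  · exact absurd ⟨p1, p2, p3, h4⟩ hprim

private lemma keyC (e1 e2 e3 e4 ec a1 a2 a3 : ℕ)
    (hsum : e1 + e2 + e3 = e4 + 2 * ec)
    (h1 : min ec (min e2 e3) ≤ e1)
    (h2 : min ec (min e1 e3) ≤ e2)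
    (h3 : min ec (min e1 e2) ≤ e3)
    (hk1 : min e1 e4 + min e2 e4 + min e3 e4 = e4)
    (ha1 : a1 = e1 - min e1 e4)
    (ha2 : a2 = e2 - min e2 e4)
    (ha3 : a3 = e3 - min e3 e4) :
    (a1 + a2 + a3 = 2 * ec) ∧ ¬(a1 < a2 ∧ a1 < a3) ∧
      ¬(a2 < a1 ∧ a2 < a3) ∧ ¬(a3 < a1 ∧ a3 < a2) := by
  refine ⟨by omega, by omega, by omega, by omega⟩

private lemma key3 (a1 a2 a3 ec m t0 w0 t1 w1 t2 w2 t3 w3 : ℕ)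
    (hsum : a1 + a2 + a3 = 2 * ec)
    (hm : m = min (min a1 a2) a3)
    (hmt1 : ¬(a1 < a2 ∧ a1 < a3))
    (hmt2 : ¬(a2 < a1 ∧ a2 < a3))
    (hmt3 : ¬(a3 < a1 ∧ a3 < a2))
    (hg : 2 * t0 + w0 = m) (hw0 : w0 ≤ 1)
    (h1 : 2 * t1 + w1 = a1 - m) (hw1 : w1 ≤ 1)
    (h2 : 2 * t2 + w2 = a2 - m) (hw2 : w2 ≤ 1)
    (h3 : 2 * t3 + w3 = a3 - m) (hw3 : w3 ≤ 1) :
    (w1 + w2 + w3 = w0) ∧ (ec = 3 * t0 + (t1 + t2 + t3) + 2 * w0) ∧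
    (t1 = 0 ∨ t2 = 0) ∧ (t1 = 0 ∨ t3 = 0) ∧ (t2 = 0 ∨ t3 = 0) ∧
    (t1 = 0 ∨ w2 = 0) ∧ (t1 = 0 ∨ w3 = 0) ∧ (t2 = 0 ∨ w1 = 0) ∧
    (t2 = 0 ∨ w3 = 0) ∧ (t3 = 0 ∨ w1 = 0) ∧ (t3 = 0 ∨ w2 = 0) := by
  refine ⟨by omega, by omega, by omega, by omega, by omega, by omega,
    by omega, by omega, by omega, by omega, by omega⟩

private lemma keyD (e1 e2 e3 e4 ec a1 a2 a3 m t0 w0 t1 w1 t2 w2 t3 w3 : ℕ)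
    (hB : e4 = 0 ∨
      (e2 = 0 ∧ e3 = 0 ∧ a1 = 2 * ec ∧ a2 = 0 ∧ a3 = 0) ∨
      (e1 = 0 ∧ e3 = 0 ∧ a2 = 2 * ec ∧ a1 = 0 ∧ a3 = 0) ∨
      (e1 = 0 ∧ e2 = 0 ∧ a3 = 2 * ec ∧ a1 = 0 ∧ a2 = 0) ∨
      (ec = 0 ∧ a1 = 0 ∧ a2 = 0 ∧ a3 = 0))
    (hm : m = min (min a1 a2) a3)
    (hg : 2 * t0 + w0 = m) (hw0 : w0 ≤ 1)
    (hd1 : 2 * t1 + w1 = a1 - m) (hw1 : w1 ≤ 1)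
    (hd2 : 2 * t2 + w2 = a2 - m) (hw2 : w2 ≤ 1)
    (hd3 : 2 * t3 + w3 = a3 - m) (hw3 : w3 ≤ 1) :
    (t0 = 0 ∨ min e1 e4 = 0) ∧ (t0 = 0 ∨ min e2 e4 = 0) ∧ (t0 = 0 ∨ min e3 e4 = 0) ∧
    (t1 = 0 ∨ min e2 e4 = 0) ∧ (t1 = 0 ∨ min e3 e4 = 0) ∧
    (t2 = 0 ∨ min e1 e4 = 0) ∧ (t2 = 0 ∨ min e3 e4 = 0) ∧
    (t3 = 0 ∨ min e1 e4 = 0) ∧ (t3 = 0 ∨ min e2 e4 = 0) ∧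
    (w1 = 0 ∨ e4 = 0) ∧ (w2 = 0 ∨ e4 = 0) ∧ (w3 = 0 ∨ e4 = 0) := by
  refine ⟨by omega, by omega, by omega, by omega, by omega, by omega,
    by omega, by omega, by omega, by omega, by omega, by omega⟩

theorem passage_to_universal_torsor
    (x1 x2 x3 x4 : ℤ)
    (hprim : Int.gcd (Int.gcd x1 x2) (Int.gcd x3 x4) = 1)
    (hne : x1 * x2 * x3 * x4 ≠ 0)
    (heq : x1 * x2 * x3 = x4 * (x1 + x2 + x3) ^ 2) :
    ∃ (ε : ℤ) (s0 s1 s2 s3 u1 u2 u3 : ℕ) (y1 y2 y3 : ℤ),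
      (ε = 1 ∨ ε = -1) ∧
      0 < s0 ∧ 0 < s1 ∧ 0 < s2 ∧ 0 < s3 ∧ 0 < u1 ∧ 0 < u2 ∧ 0 < u3 ∧
      y1 ≠ 0 ∧ y2 ≠ 0 ∧ y3 ≠ 0 ∧ Int.gcd (Int.gcd y1 y2) y3 = 1 ∧
      ε * ((s0 * s1 * s2 * s3 * u1 * u2 * u3 : ℕ) : ℤ)
        = y1 * u1 * (s1 : ℤ) ^ 2 + y2 * u2 * (s2 : ℤ) ^ 2 + y3 * u3 * (s3 : ℤ) ^ 2 ∧
      Squarefree (u1 * u2 * u3) ∧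
      Nat.Coprime s1 s2 ∧ Nat.Coprime s1 s3 ∧ Nat.Coprime s2 s3 ∧
      Nat.Coprime s1 u2 ∧ Nat.Coprime s1 u3 ∧ Nat.Coprime s2 u1 ∧
      Nat.Coprime s2 u3 ∧ Nat.Coprime s3 u1 ∧ Nat.Coprime s3 u2 ∧
      Int.gcd (s0 : ℤ) y1 = 1 ∧ Int.gcd (s0 : ℤ) y2 = 1 ∧ Int.gcd (s0 : ℤ) y3 = 1 ∧
      Int.gcd (s1 : ℤ) y2 = 1 ∧ Int.gcd (s1 : ℤ) y3 = 1 ∧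
      Int.gcd (s2 : ℤ) y1 = 1 ∧ Int.gcd (s2 : ℤ) y3 = 1 ∧
      Int.gcd (s3 : ℤ) y1 = 1 ∧ Int.gcd (s3 : ℤ) y2 = 1 ∧
      Int.gcd (u1 : ℤ) (y1 * y2 * y3) = 1 ∧ Int.gcd (u2 : ℤ) (y1 * y2 * y3) = 1 ∧
      Int.gcd (u3 : ℤ) (y1 * y2 * y3) = 1 ∧
      x1 = y1 * (u1 : ℤ) ^ 2 * u2 * u3 * (s0 : ℤ) ^ 2 * (s1 : ℤ) ^ 2 ∧
      x2 = y2 * (u2 : ℤ) ^ 2 * u1 * u3 * (s0 : ℤ) ^ 2 * (s2 : ℤ) ^ 2 ∧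
      x3 = y3 * (u3 : ℤ) ^ 2 * u1 * u2 * (s0 : ℤ) ^ 2 * (s3 : ℤ) ^ 2 ∧
      x4 = y1 * y2 * y3 := by
  have hx1 : x1 ≠ 0 := fun h => hne (by rw [h]; ring)
  have hx2 : x2 ≠ 0 := fun h => hne (by rw [h]; ring)
  have hx3 : x3 ≠ 0 := fun h => hne (by rw [h]; ring)
  have hx4 : x4 ≠ 0 := fun h => hne (by rw [h]; ring)
  have hc0 : x1 + x2 + x3 ≠ 0 := by
    intro h
    have h1 : x1 * x2 * x3 = 0 := by rw [heq, h]; ring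
    exact hne (by rw [h1, zero_mul])
  set X1 : ℕ := x1.natAbs with hX1def
  set X2 : ℕ := x2.natAbs with hX2def
  set X3 : ℕ := x3.natAbs with hX3def
  set X4 : ℕ := x4.natAbs with hX4def
  set C : ℕ := (x1 + x2 + x3).natAbs with hCdef
  have hX1pos : X1 ≠ 0 := Int.natAbs_ne_zero.mpr hx1
  have hX2pos : X2 ≠ 0 := Int.natAbs_ne_zero.mpr hx2
  have hX3pos : X3 ≠ 0 := Int.natAbs_ne_zero.mpr hx3
  have hX4pos : X4 ≠ 0 := Int.natAbs_ne_zero.mpr hx4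
  have hCpos : C ≠ 0 := Int.natAbs_ne_zero.mpr hc0
  have hXeq : X1 * X2 * X3 = X4 * C ^ 2 := by
    have h := congrArg Int.natAbs heq
    simpa [Int.natAbs_mul, Int.natAbs_pow, ← hX1def, ← hX2def, ← hX3def, ← hX4def,
      ← hCdef] using h
  have hprimN : Nat.gcd (Nat.gcd X1 X2) (Nat.gcd X3 X4) = 1 := by
    simpa [Int.gcd, ← hX1def, ← hX2def, ← hX3def, ← hX4def] using hprim
  set Y1 : ℕ := Nat.gcd X1 X4 with hY1def
  set Y2 : ℕ := Nat.gcd X2 X4 with hY2def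
  set Y3 : ℕ := Nat.gcd X3 X4 with hY3def
  have hY1dvd : Y1 ∣ X1 := Nat.gcd_dvd_left _ _
  have hY2dvd : Y2 ∣ X2 := Nat.gcd_dvd_left _ _
  have hY3dvd : Y3 ∣ X3 := Nat.gcd_dvd_left _ _
  have hY1dvd4 : Y1 ∣ X4 := Nat.gcd_dvd_right _ _
  have hY2dvd4 : Y2 ∣ X4 := Nat.gcd_dvd_right _ _
  have hY3dvd4 : Y3 ∣ X4 := Nat.gcd_dvd_right _ _
  have hY1pos : Y1 ≠ 0 := fun h => hX1pos (Nat.eq_zero_of_gcd_eq_zero_left h)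
  have hY2pos : Y2 ≠ 0 := fun h => hX2pos (Nat.eq_zero_of_gcd_eq_zero_left h)
  have hY3pos : Y3 ≠ 0 := fun h => hX3pos (Nat.eq_zero_of_gcd_eq_zero_left h)
  set Z1 : ℕ := X1 / Y1 with hZ1def
  set Z2 : ℕ := X2 / Y2 with hZ2def
  set Z3 : ℕ := X3 / Y3 with hZ3def
  have hXZ1 : X1 = Y1 * Z1 := (Nat.mul_div_cancel' hY1dvd).symm
  have hXZ2 : X2 = Y2 * Z2 := (Nat.mul_div_cancel' hY2dvd).symm
  have hXZ3 : X3 = Y3 * Z3 := (Nat.mul_div_cancel' hY3dvd).symm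
  have hZ1pos : Z1 ≠ 0 := fun h => hX1pos (by rw [hXZ1, h, mul_zero])
  have hZ2pos : Z2 ≠ 0 := fun h => hX2pos (by rw [hXZ2, h, mul_zero])
  have hZ3pos : Z3 ≠ 0 := fun h => hX3pos (by rw [hXZ3, h, mul_zero])
  set g : ℕ := Nat.gcd (Nat.gcd Z1 Z2) Z3 with hgdef
  have hgdvd1 : g ∣ Z1 := (Nat.gcd_dvd_left _ _).trans (Nat.gcd_dvd_left _ _)
  have hgdvd2 : g ∣ Z2 := (Nat.gcd_dvd_left _ _).trans (Nat.gcd_dvd_right _ _)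
  have hgdvd3 : g ∣ Z3 := Nat.gcd_dvd_right _ _
  have hgpos : g ≠ 0 := fun h => hZ3pos (Nat.eq_zero_of_gcd_eq_zero_right h)
  set W1 : ℕ := Z1 / g with hW1def
  set W2 : ℕ := Z2 / g with hW2def
  set W3 : ℕ := Z3 / g with hW3def
  have hZW1 : Z1 = g * W1 := (Nat.mul_div_cancel' hgdvd1).symm
  have hZW2 : Z2 = g * W2 := (Nat.mul_div_cancel' hgdvd2).symm
  have hZW3 : Z3 = g * W3 := (Nat.mul_div_cancel' hgdvd3).symm
  have hW1pos : W1 ≠ 0 := fun h => hZ1pos (by rw [hZW1, h, mul_zero])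
  have hW2pos : W2 ≠ 0 := fun h => hZ2pos (by rw [hZW2, h, mul_zero])
  have hW3pos : W3 ≠ 0 := fun h => hZ3pos (by rw [hZW3, h, mul_zero])
  obtain ⟨u0, s0, hu0pos, hs0pos, hgdec, hu0sq⟩ :=
    Nat.sq_mul_squarefree_of_pos (Nat.pos_of_ne_zero hgpos)
  obtain ⟨u1, s1, hu1pos, hs1pos, hW1dec, hu1sq⟩ :=
    Nat.sq_mul_squarefree_of_pos (Nat.pos_of_ne_zero hW1pos)
  obtain ⟨u2, s2, hu2pos, hs2pos, hW2dec, hu2sq⟩ :=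
    Nat.sq_mul_squarefree_of_pos (Nat.pos_of_ne_zero hW2pos)
  obtain ⟨u3, s3, hu3pos, hs3pos, hW3dec, hu3sq⟩ :=
    Nat.sq_mul_squarefree_of_pos (Nat.pos_of_ne_zero hW3pos)
  have key : ∀ p : ℕ, p.Prime →
      (Y1.factorization p + Y2.factorization p + Y3.factorization p = X4.factorization p) ∧
      (u1.factorization p + u2.factorization p + u3.factorization p = u0.factorization p) ∧
      (C.factorization p = 3 * s0.factorization p +
        (s1.factorization p + s2.factorization p + s3.factorization p) +
        2 * u0.factorization p) ∧
      (s1.factorization p = 0 ∨ s2.factorization p = 0) ∧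
      (s1.factorization p = 0 ∨ s3.factorization p = 0) ∧
      (s2.factorization p = 0 ∨ s3.factorization p = 0) ∧
      (s1.factorization p = 0 ∨ u2.factorization p = 0) ∧
      (s1.factorization p = 0 ∨ u3.factorization p = 0) ∧
      (s2.factorization p = 0 ∨ u1.factorization p = 0) ∧
      (s2.factorization p = 0 ∨ u3.factorization p = 0) ∧
      (s3.factorization p = 0 ∨ u1.factorization p = 0) ∧
      (s3.factorization p = 0 ∨ u2.factorization p = 0) ∧
      (s0.factorization p = 0 ∨ Y1.factorization p = 0) ∧
      (s0.factorization p = 0 ∨ Y2.factorization p = 0) ∧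
      (s0.factorization p = 0 ∨ Y3.factorization p = 0) ∧
      (s1.factorization p = 0 ∨ Y2.factorization p = 0) ∧
      (s1.factorization p = 0 ∨ Y3.factorization p = 0) ∧
      (s2.factorization p = 0 ∨ Y1.factorization p = 0) ∧
      (s2.factorization p = 0 ∨ Y3.factorization p = 0) ∧
      (s3.factorization p = 0 ∨ Y1.factorization p = 0) ∧
      (s3.factorization p = 0 ∨ Y2.factorization p = 0) ∧
      (u1.factorization p = 0 ∨ X4.factorization p = 0) ∧
      (u2.factorization p = 0 ∨ X4.factorization p = 0) ∧
      (u3.factorization p = 0 ∨ X4.factorization p = 0) := by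
    intro p hp
    have A1 : X1.factorization p + X2.factorization p + X3.factorization p
        = X4.factorization p + 2 * C.factorization p := by
      have h1 : (X1 * X2 * X3).factorization = (X4 * C ^ 2).factorization := by rw [hXeq]
      rw [Nat.factorization_mul (mul_ne_zero hX1pos hX2pos) hX3pos,
        Nat.factorization_mul hX1pos hX2pos,
        Nat.factorization_mul hX4pos (pow_ne_zero 2 hCpos),
        Nat.factorization_pow] at h1
      have h2 := congrArg (fun f : ℕ →₀ ℕ => f p) h1
      simpa [Finsupp.add_apply, Finsupp.smul_apply, two_mul] using h2
    have A2 : ¬(0 < X1.factorization p ∧ 0 < X2.factorization p ∧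
        0 < X3.factorization p ∧ 0 < X4.factorization p) := by
      rintro ⟨h1, h2, h3, h4⟩
      have d1 := Nat.dvd_of_factorization_pos h1.ne'
      have d2 := Nat.dvd_of_factorization_pos h2.ne'
      have d3 := Nat.dvd_of_factorization_pos h3.ne'
      have d4 := Nat.dvd_of_factorization_pos h4.ne'
      have : p ∣ 1 := hprimN ▸ Nat.dvd_gcd (Nat.dvd_gcd d1 d2) (Nat.dvd_gcd d3 d4)
      exact hp.ne_one (Nat.dvd_one.mp this)
    have A3 : min (C.factorization p) (min (X2.factorization p) (X3.factorization p))
        ≤ X1.factorization p := by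
      have h := fact_min3_le hp (a := x1 + x2 + x3) (b := -x2) (c := -x3) hx1 (by ring)
      simpa [Int.natAbs_neg, ← hCdef, ← hX1def, ← hX2def, ← hX3def] using h
    have A4 : min (C.factorization p) (min (X1.factorization p) (X3.factorization p))
        ≤ X2.factorization p := by
      have h := fact_min3_le hp (a := x1 + x2 + x3) (b := -x1) (c := -x3) hx2 (by ring)
      simpa [Int.natAbs_neg, ← hCdef, ← hX1def, ← hX2def, ← hX3def] using h
    have A5 : min (C.factorization p) (min (X1.factorization p) (X2.factorization p))
        ≤ X3.factorization p := by
      have h := fact_min3_le hp (a := x1 + x2 + x3) (b := -x1) (c := -x2) hx3 (by ring)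
      simpa [Int.natAbs_neg, ← hCdef, ← hX1def, ← hX2def, ← hX3def] using h
    have A6 : min (X1.factorization p) (min (X2.factorization p) (X3.factorization p))
        ≤ C.factorization p := by
      have h := fact_min3_le hp (a := x1) (b := x2) (c := x3) hc0 rfl
      simpa [← hCdef, ← hX1def, ← hX2def, ← hX3def] using h
    have A3' : min (C.factorization p) (min (X2.factorization p) (X3.factorization p))
        ≤ X1.factorization p := A3
    have AY1 : Y1.factorization p = min (X1.factorization p) (X4.factorization p) := by
      have h := congrArg (fun f : ℕ →₀ ℕ => f p) (Nat.factorization_gcd hX1pos hX4pos)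
      simpa [Finsupp.inf_apply] using h
    have AY2 : Y2.factorization p = min (X2.factorization p) (X4.factorization p) := by
      have h := congrArg (fun f : ℕ →₀ ℕ => f p) (Nat.factorization_gcd hX2pos hX4pos)
      simpa [Finsupp.inf_apply] using h
    have AY3 : Y3.factorization p = min (X3.factorization p) (X4.factorization p) := by
      have h := congrArg (fun f : ℕ →₀ ℕ => f p) (Nat.factorization_gcd hX3pos hX4pos)
      simpa [Finsupp.inf_apply] using h
    have AZ1 : Z1.factorization p = X1.factorization p - Y1.factorization p := by
      have h := congrArg (fun f : ℕ →₀ ℕ => f p) (Nat.factorization_div hY1dvd)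
      simpa [Finsupp.tsub_apply, ← hZ1def] using h
    have AZ2 : Z2.factorization p = X2.factorization p - Y2.factorization p := by
      have h := congrArg (fun f : ℕ →₀ ℕ => f p) (Nat.factorization_div hY2dvd)
      simpa [Finsupp.tsub_apply, ← hZ2def] using h
    have AZ3 : Z3.factorization p = X3.factorization p - Y3.factorization p := by
      have h := congrArg (fun f : ℕ →₀ ℕ => f p) (Nat.factorization_div hY3dvd)
      simpa [Finsupp.tsub_apply, ← hZ3def] using h
    rw [AY1] at AZ1
    rw [AY2] at AZ2
    rw [AY3] at AZ3
    have hgcd12pos : Nat.gcd Z1 Z2 ≠ 0 := fun h => hZ1pos (Nat.eq_zero_of_gcd_eq_zero_left h)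
    have Am : g.factorization p
        = min (min (Z1.factorization p) (Z2.factorization p)) (Z3.factorization p) := by
      have h1 := congrArg (fun f : ℕ →₀ ℕ => f p) (Nat.factorization_gcd hgcd12pos hZ3pos)
      have h2 := congrArg (fun f : ℕ →₀ ℕ => f p) (Nat.factorization_gcd hZ1pos hZ2pos)
      simp only [Finsupp.inf_apply] at h1 h2
      rw [hgdef, h1, h2]
    have AW1 : W1.factorization p = Z1.factorization p - g.factorization p := by
      have h := congrArg (fun f : ℕ →₀ ℕ => f p) (Nat.factorization_div hgdvd1)
      simpa [Finsupp.tsub_apply, ← hW1def] using h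
    have AW2 : W2.factorization p = Z2.factorization p - g.factorization p := by
      have h := congrArg (fun f : ℕ →₀ ℕ => f p) (Nat.factorization_div hgdvd2)
      simpa [Finsupp.tsub_apply, ← hW2def] using h
    have AW3 : W3.factorization p = Z3.factorization p - g.factorization p := by
      have h := congrArg (fun f : ℕ →₀ ℕ => f p) (Nat.factorization_div hgdvd3)
      simpa [Finsupp.tsub_apply, ← hW3def] using h
    have Ag : 2 * s0.factorization p + u0.factorization p = g.factorization p := by
      have h1 : (s0 ^ 2 * u0).factorization = g.factorization := by rw [hgdec]
      rw [Nat.factorization_mul (pow_ne_zero 2 hs0pos.ne') hu0pos.ne',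
        Nat.factorization_pow] at h1
      have h2 := congrArg (fun f : ℕ →₀ ℕ => f p) h1
      simpa [Finsupp.add_apply, Finsupp.smul_apply] using h2
    have Au1 : 2 * s1.factorization p + u1.factorization p = W1.factorization p := by
      have h1 : (s1 ^ 2 * u1).factorization = W1.factorization := by rw [hW1dec]
      rw [Nat.factorization_mul (pow_ne_zero 2 hs1pos.ne') hu1pos.ne',
        Nat.factorization_pow] at h1
      have h2 := congrArg (fun f : ℕ →₀ ℕ => f p) h1
      simpa [Finsupp.add_apply, Finsupp.smul_apply] using h2
    have Au2 : 2 * s2.factorization p + u2.factorization p = W2.factorization p := by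
      have h1 : (s2 ^ 2 * u2).factorization = W2.factorization := by rw [hW2dec]
      rw [Nat.factorization_mul (pow_ne_zero 2 hs2pos.ne') hu2pos.ne',
        Nat.factorization_pow] at h1
      have h2 := congrArg (fun f : ℕ →₀ ℕ => f p) h1
      simpa [Finsupp.add_apply, Finsupp.smul_apply] using h2
    have Au3 : 2 * s3.factorization p + u3.factorization p = W3.factorization p := by
      have h1 : (s3 ^ 2 * u3).factorization = W3.factorization := by rw [hW3dec]
      rw [Nat.factorization_mul (pow_ne_zero 2 hs3pos.ne') hu3pos.ne',
        Nat.factorization_pow] at h1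
      have h2 := congrArg (fun f : ℕ →₀ ℕ => f p) h1
      simpa [Finsupp.add_apply, Finsupp.smul_apply] using h2
    rw [AW1] at Au1
    rw [AW2] at Au2
    rw [AW3] at Au3
    have Asq0 : u0.factorization p ≤ 1 :=
      (Nat.squarefree_iff_factorization_le_one hu0pos.ne').mp hu0sq p
    have Asq1 : u1.factorization p ≤ 1 :=
      (Nat.squarefree_iff_factorization_le_one hu1pos.ne').mp hu1sq p
    have Asq2 : u2.factorization p ≤ 1 :=
      (Nat.squarefree_iff_factorization_le_one hu2pos.ne').mp hu2sq p
    have Asq3 : u3.factorization p ≤ 1 :=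
      (Nat.squarefree_iff_factorization_le_one hu3pos.ne').mp hu3sq p
    have K1 := key1 _ _ _ _ _ A1 A2 A3 A4 A5
    have KB := keyB _ _ _ _ _ _ _ _ A1 A2 A3 A4 A5 AZ1 AZ2 AZ3
    have KC := keyC _ _ _ _ _ _ _ _ A1 A3 A4 A5 K1 AZ1 AZ2 AZ3
    have K3 := key3 _ _ _ _ _ _ _ _ _ _ _ _ _ KC.1 Am KC.2.1 KC.2.2.1 KC.2.2.2
      Ag Asq0 Au1 Asq1 Au2 Asq2 Au3 Asq3
    have KD := keyD _ _ _ _ _ _ _ _ _ _ _ _ _ _ _ _ _ KB Am Ag Asq0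
      Au1 Asq1 Au2 Asq2 Au3 Asq3
    refine ⟨by rw [AY1, AY2, AY3]; exact K1, K3.1, K3.2.1,
      K3.2.2.1, K3.2.2.2.1, K3.2.2.2.2.1, K3.2.2.2.2.2.1, K3.2.2.2.2.2.2.1,
      K3.2.2.2.2.2.2.2.1, K3.2.2.2.2.2.2.2.2.1, K3.2.2.2.2.2.2.2.2.2.1,
      K3.2.2.2.2.2.2.2.2.2.2,
      KD.1.imp_right AY1.trans, KD.2.1.imp_right AY2.trans, KD.2.2.1.imp_right AY3.trans,
      KD.2.2.2.1.imp_right AY2.trans, KD.2.2.2.2.1.imp_right AY3.trans,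
      KD.2.2.2.2.2.1.imp_right AY1.trans, KD.2.2.2.2.2.2.1.imp_right AY3.trans,
      KD.2.2.2.2.2.2.2.1.imp_right AY1.trans, KD.2.2.2.2.2.2.2.2.1.imp_right AY2.trans,
      KD.2.2.2.2.2.2.2.2.2.1, KD.2.2.2.2.2.2.2.2.2.2.1, KD.2.2.2.2.2.2.2.2.2.2.2⟩
  -- global equalities
  have E1 : Y1 * Y2 * Y3 = X4 := by
    refine eq_of_fact_eq (mul_ne_zero (mul_ne_zero hY1pos hY2pos) hY3pos) hX4pos ?_
    intro p hp
    rw [Nat.factorization_mul (mul_ne_zero hY1pos hY2pos) hY3pos,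
      Nat.factorization_mul hY1pos hY2pos]
    simp only [Finsupp.add_apply]
    exact (key p hp).1
  have E2 : u1 * u2 * u3 = u0 := by
    refine eq_of_fact_eq (mul_ne_zero (mul_ne_zero hu1pos.ne' hu2pos.ne') hu3pos.ne')
      hu0pos.ne' ?_
    intro p hp
    rw [Nat.factorization_mul (mul_ne_zero hu1pos.ne' hu2pos.ne') hu3pos.ne',
      Nat.factorization_mul hu1pos.ne' hu2pos.ne']
    simp only [Finsupp.add_apply]
    exact (key p hp).2.1
  have E3 : C = s0 ^ 3 * (s1 * s2 * s3) * u0 ^ 2 := by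
    refine eq_of_fact_eq hCpos (by positivity) ?_
    intro p hp
    rw [Nat.factorization_mul (mul_ne_zero (pow_ne_zero 3 hs0pos.ne')
        (mul_ne_zero (mul_ne_zero hs1pos.ne' hs2pos.ne') hs3pos.ne'))
        (pow_ne_zero 2 hu0pos.ne'),
      Nat.factorization_mul (pow_ne_zero 3 hs0pos.ne')
        (mul_ne_zero (mul_ne_zero hs1pos.ne' hs2pos.ne') hs3pos.ne'),
      Nat.factorization_mul (mul_ne_zero hs1pos.ne' hs2pos.ne') hs3pos.ne',
      Nat.factorization_mul hs1pos.ne' hs2pos.ne',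
      Nat.factorization_pow, Nat.factorization_pow]
    simp only [Finsupp.add_apply, Finsupp.smul_apply, smul_eq_mul]
    exact (key p hp).2.2.1
  -- full Z decompositions
  have hZfull1 : Z1 = u1 ^ 2 * u2 * u3 * s0 ^ 2 * s1 ^ 2 := by
    rw [hZW1, ← hgdec, ← hW1dec, ← E2]; ring
  have hZfull2 : Z2 = u2 ^ 2 * u1 * u3 * s0 ^ 2 * s2 ^ 2 := by
    rw [hZW2, ← hgdec, ← hW2dec, ← E2]; ring
  have hZfull3 : Z3 = u3 ^ 2 * u1 * u2 * s0 ^ 2 * s3 ^ 2 := by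
    rw [hZW3, ← hgdec, ← hW3dec, ← E2]; ring
  -- integer data
  set ε : ℤ := (x1 + x2 + x3).sign with hεdef
  set y1 : ℤ := x1.sign * (Y1 : ℤ) with hy1def
  set y2 : ℤ := x2.sign * (Y2 : ℤ) with hy2def
  set y3 : ℤ := x3.sign * (Y3 : ℤ) with hy3def
  have hy1abs : y1.natAbs = Y1 := by
    rw [hy1def, Int.natAbs_mul, Int.natAbs_sign_of_ne_zero hx1, one_mul, Int.natAbs_natCast]
  have hy2abs : y2.natAbs = Y2 := by
    rw [hy2def, Int.natAbs_mul, Int.natAbs_sign_of_ne_zero hx2, one_mul, Int.natAbs_natCast]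
  have hy3abs : y3.natAbs = Y3 := by
    rw [hy3def, Int.natAbs_mul, Int.natAbs_sign_of_ne_zero hx3, one_mul, Int.natAbs_natCast]
  have hy1ne : y1 ≠ 0 := by
    rw [hy1def]
    exact mul_ne_zero (fun h => hx1 (Int.sign_eq_zero_iff_zero.mp h))
      (Int.natCast_ne_zero.mpr hY1pos)
  have hy2ne : y2 ≠ 0 := by
    rw [hy2def]
    exact mul_ne_zero (fun h => hx2 (Int.sign_eq_zero_iff_zero.mp h))
      (Int.natCast_ne_zero.mpr hY2pos)
  have hy3ne : y3 ≠ 0 := by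
    rw [hy3def]
    exact mul_ne_zero (fun h => hx3 (Int.sign_eq_zero_iff_zero.mp h))
      (Int.natCast_ne_zero.mpr hY3pos)
  have hs1 : x1 = x1.sign * (X1 : ℤ) := by
    rw [hX1def]; exact (Int.sign_mul_natAbs x1).symm
  have hs2 : x2 = x2.sign * (X2 : ℤ) := by
    rw [hX2def]; exact (Int.sign_mul_natAbs x2).symm
  have hs3 : x3 = x3.sign * (X3 : ℤ) := by
    rw [hX3def]; exact (Int.sign_mul_natAbs x3).symm
  have hx1Z : x1 = y1 * (Z1 : ℤ) := by
    rw [hs1, hXZ1, hy1def]; push_cast; ring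
  have hx2Z : x2 = y2 * (Z2 : ℤ) := by
    rw [hs2, hXZ2, hy2def]; push_cast; ring
  have hx3Z : x3 = y3 * (Z3 : ℤ) := by
    rw [hs3, hXZ3, hy3def]; push_cast; ring
  have hx1final : x1 = y1 * (u1 : ℤ) ^ 2 * u2 * u3 * (s0 : ℤ) ^ 2 * (s1 : ℤ) ^ 2 := by
    rw [hx1Z, hZfull1]; push_cast; ring
  have hx2final : x2 = y2 * (u2 : ℤ) ^ 2 * u1 * u3 * (s0 : ℤ) ^ 2 * (s2 : ℤ) ^ 2 := by
    rw [hx2Z, hZfull2]; push_cast; ring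
  have hx3final : x3 = y3 * (u3 : ℤ) ^ 2 * u1 * u2 * (s0 : ℤ) ^ 2 * (s3 : ℤ) ^ 2 := by
    rw [hx3Z, hZfull3]; push_cast; ring
  have hZC : Z1 * Z2 * Z3 = C ^ 2 := by
    have h : Y1 * Y2 * Y3 * (Z1 * Z2 * Z3) = X4 * C ^ 2 := by
      rw [← hXeq, hXZ1, hXZ2, hXZ3]; ring
    rw [E1] at h
    exact Nat.eq_of_mul_eq_mul_left (Nat.pos_of_ne_zero hX4pos) h
  have hcsq : (x1 + x2 + x3) ^ 2 = (C : ℤ) ^ 2 := by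
    rw [hCdef]; exact (Int.natAbs_sq _).symm
  have hx4y : x4 = y1 * y2 * y3 := by
    have h1 : x1 * x2 * x3 = y1 * y2 * y3 * ((Z1 * Z2 * Z3 : ℕ) : ℤ) := by
      rw [hx1Z, hx2Z, hx3Z]; push_cast; ring
    rw [hZC] at h1
    have h2 : x4 * (C : ℤ) ^ 2 = y1 * y2 * y3 * (C : ℤ) ^ 2 := by
      calc x4 * (C : ℤ) ^ 2 = x4 * (x1 + x2 + x3) ^ 2 := by rw [hcsq]
        _ = x1 * x2 * x3 := heq.symm
        _ = y1 * y2 * y3 * ((C ^ 2 : ℕ) : ℤ) := h1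
        _ = y1 * y2 * y3 * (C : ℤ) ^ 2 := by push_cast; ring
    exact mul_right_cancel₀ (pow_ne_zero 2 (Int.natCast_ne_zero.mpr hCpos)) h2
  have hx123 : x1 + x2 + x3 = ε * (C : ℤ) := by
    rw [hεdef, hCdef]; exact (Int.sign_mul_natAbs _).symm
  have hCnat : C = s0 * s1 * s2 * s3 * u1 * u2 * u3 * (s0 ^ 2 * (u1 * u2 * u3)) := by
    rw [E3, ← E2]; ring
  have hεor : ε = 1 ∨ ε = -1 := by
    rw [hεdef]
    rcases lt_trichotomy (x1 + x2 + x3) 0 with h | h | h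
    · right; exact Int.sign_eq_neg_one_iff_neg.mpr h
    · exact absurd h hc0
    · left; exact Int.sign_eq_one_iff_pos.mpr h
  have hmain : ε * ((s0 * s1 * s2 * s3 * u1 * u2 * u3 : ℕ) : ℤ)
      = y1 * u1 * (s1 : ℤ) ^ 2 + y2 * u2 * (s2 : ℤ) ^ 2 + y3 * u3 * (s3 : ℤ) ^ 2 := by
    have hK : ((s0 : ℤ) ^ 2 * ((u1 : ℤ) * u2 * u3)) ≠ 0 := by positivity
    refine mul_right_cancel₀ hK ?_
    calc ε * ((s0 * s1 * s2 * s3 * u1 * u2 * u3 : ℕ) : ℤ) * ((s0 : ℤ) ^ 2 * ((u1 : ℤ) * u2 * u3))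
        = ε * (C : ℤ) := by rw [hCnat]; push_cast; ring
      _ = x1 + x2 + x3 := hx123.symm
      _ = (y1 * u1 * (s1 : ℤ) ^ 2 + y2 * u2 * (s2 : ℤ) ^ 2 + y3 * u3 * (s3 : ℤ) ^ 2) *
            ((s0 : ℤ) ^ 2 * ((u1 : ℤ) * u2 * u3)) := by
          rw [hx1final, hx2final, hx3final]; ring
  have hsqu : Squarefree (u1 * u2 * u3) := by rw [E2]; exact hu0sq
  -- coprimality facts
  have hcop12 : Nat.Coprime s1 s2 := by
    refine coprime_of_prime_fact fun p hp hd1 hd2 => ?_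
    have f1 := hp.factorization_pos_of_dvd hs1pos.ne' hd1
    have f2 := hp.factorization_pos_of_dvd hs2pos.ne' hd2
    rcases (key p hp).2.2.2.1 with h | h <;> omega
  have hcop13 : Nat.Coprime s1 s3 := by
    refine coprime_of_prime_fact fun p hp hd1 hd2 => ?_
    have f1 := hp.factorization_pos_of_dvd hs1pos.ne' hd1
    have f2 := hp.factorization_pos_of_dvd hs3pos.ne' hd2
    rcases (key p hp).2.2.2.2.1 with h | h <;> omega
  have hcop23 : Nat.Coprime s2 s3 := by
    refine coprime_of_prime_fact fun p hp hd1 hd2 => ?_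
    have f1 := hp.factorization_pos_of_dvd hs2pos.ne' hd1
    have f2 := hp.factorization_pos_of_dvd hs3pos.ne' hd2
    rcases (key p hp).2.2.2.2.2.1 with h | h <;> omega
  have hcop1u2 : Nat.Coprime s1 u2 := by
    refine coprime_of_prime_fact fun p hp hd1 hd2 => ?_
    have f1 := hp.factorization_pos_of_dvd hs1pos.ne' hd1
    have f2 := hp.factorization_pos_of_dvd hu2pos.ne' hd2
    rcases (key p hp).2.2.2.2.2.2.1 with h | h <;> omega
  have hcop1u3 : Nat.Coprime s1 u3 := by
    refine coprime_of_prime_fact fun p hp hd1 hd2 => ?_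
    have f1 := hp.factorization_pos_of_dvd hs1pos.ne' hd1
    have f2 := hp.factorization_pos_of_dvd hu3pos.ne' hd2
    rcases (key p hp).2.2.2.2.2.2.2.1 with h | h <;> omega
  have hcop2u1 : Nat.Coprime s2 u1 := by
    refine coprime_of_prime_fact fun p hp hd1 hd2 => ?_
    have f1 := hp.factorization_pos_of_dvd hs2pos.ne' hd1
    have f2 := hp.factorization_pos_of_dvd hu1pos.ne' hd2
    rcases (key p hp).2.2.2.2.2.2.2.2.1 with h | h <;> omega
  have hcop2u3 : Nat.Coprime s2 u3 := by
    refine coprime_of_prime_fact fun p hp hd1 hd2 => ?_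
    have f1 := hp.factorization_pos_of_dvd hs2pos.ne' hd1
    have f2 := hp.factorization_pos_of_dvd hu3pos.ne' hd2
    rcases (key p hp).2.2.2.2.2.2.2.2.2.1 with h | h <;> omega
  have hcop3u1 : Nat.Coprime s3 u1 := by
    refine coprime_of_prime_fact fun p hp hd1 hd2 => ?_
    have f1 := hp.factorization_pos_of_dvd hs3pos.ne' hd1
    have f2 := hp.factorization_pos_of_dvd hu1pos.ne' hd2
    rcases (key p hp).2.2.2.2.2.2.2.2.2.2.1 with h | h <;> omega
  have hcop3u2 : Nat.Coprime s3 u2 := by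
    refine coprime_of_prime_fact fun p hp hd1 hd2 => ?_
    have f1 := hp.factorization_pos_of_dvd hs3pos.ne' hd1
    have f2 := hp.factorization_pos_of_dvd hu2pos.ne' hd2
    rcases (key p hp).2.2.2.2.2.2.2.2.2.2.2.1 with h | h <;> omega
  have hgy : Nat.gcd (Nat.gcd Y1 Y2) Y3 = 1 := by
    refine coprime_of_prime_fact fun p hp hd12 hd3 => ?_
    have hpY1 : p ∣ Y1 := hd12.trans (Nat.gcd_dvd_left _ _)
    have hpY2 : p ∣ Y2 := hd12.trans (Nat.gcd_dvd_right _ _)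
    have h1 : p ∣ Nat.gcd X1 X2 := Nat.dvd_gcd (hpY1.trans hY1dvd) (hpY2.trans hY2dvd)
    have h2 : p ∣ Nat.gcd X3 X4 := Nat.dvd_gcd (hd3.trans hY3dvd) (hd3.trans hY3dvd4)
    have h3 : p ∣ 1 := hprimN ▸ Nat.dvd_gcd h1 h2
    exact hp.ne_one (Nat.dvd_one.mp h3)
  have hgcdy : Int.gcd (↑(Int.gcd y1 y2)) y3 = 1 := by
    have h12 : Int.gcd y1 y2 = Nat.gcd Y1 Y2 := by rw [Int.gcd_def, hy1abs, hy2abs]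
    rw [Int.gcd_def, h12, Int.natAbs_natCast, hy3abs]
    exact hgy
  have hgs0y1 : Int.gcd (s0 : ℤ) y1 = 1 := by
    rw [Int.gcd_def, Int.natAbs_natCast, hy1abs]
    refine coprime_of_prime_fact fun p hp hd1 hd2 => ?_
    have f1 := hp.factorization_pos_of_dvd hs0pos.ne' hd1
    have f2 := hp.factorization_pos_of_dvd hY1pos hd2
    rcases (key p hp).2.2.2.2.2.2.2.2.2.2.2.2.1 with h | h <;> omega
  have hgs0y2 : Int.gcd (s0 : ℤ) y2 = 1 := by
    rw [Int.gcd_def, Int.natAbs_natCast, hy2abs]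
    refine coprime_of_prime_fact fun p hp hd1 hd2 => ?_
    have f1 := hp.factorization_pos_of_dvd hs0pos.ne' hd1
    have f2 := hp.factorization_pos_of_dvd hY2pos hd2
    rcases (key p hp).2.2.2.2.2.2.2.2.2.2.2.2.2.1 with h | h <;> omega
  have hgs0y3 : Int.gcd (s0 : ℤ) y3 = 1 := by
    rw [Int.gcd_def, Int.natAbs_natCast, hy3abs]
    refine coprime_of_prime_fact fun p hp hd1 hd2 => ?_
    have f1 := hp.factorization_pos_of_dvd hs0pos.ne' hd1
    have f2 := hp.factorization_pos_of_dvd hY3pos hd2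
    rcases (key p hp).2.2.2.2.2.2.2.2.2.2.2.2.2.2.1 with h | h <;> omega
  have hgs1y2 : Int.gcd (s1 : ℤ) y2 = 1 := by
    rw [Int.gcd_def, Int.natAbs_natCast, hy2abs]
    refine coprime_of_prime_fact fun p hp hd1 hd2 => ?_
    have f1 := hp.factorization_pos_of_dvd hs1pos.ne' hd1
    have f2 := hp.factorization_pos_of_dvd hY2pos hd2
    rcases (key p hp).2.2.2.2.2.2.2.2.2.2.2.2.2.2.2.1 with h | h <;> omega
  have hgs1y3 : Int.gcd (s1 : ℤ) y3 = 1 := by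
    rw [Int.gcd_def, Int.natAbs_natCast, hy3abs]
    refine coprime_of_prime_fact fun p hp hd1 hd2 => ?_
    have f1 := hp.factorization_pos_of_dvd hs1pos.ne' hd1
    have f2 := hp.factorization_pos_of_dvd hY3pos hd2
    rcases (key p hp).2.2.2.2.2.2.2.2.2.2.2.2.2.2.2.2.1 with h | h <;> omega
  have hgs2y1 : Int.gcd (s2 : ℤ) y1 = 1 := by
    rw [Int.gcd_def, Int.natAbs_natCast, hy1abs]
    refine coprime_of_prime_fact fun p hp hd1 hd2 => ?_
    have f1 := hp.factorization_pos_of_dvd hs2pos.ne' hd1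
    have f2 := hp.factorization_pos_of_dvd hY1pos hd2
    rcases (key p hp).2.2.2.2.2.2.2.2.2.2.2.2.2.2.2.2.2.1 with h | h <;> omega
  have hgs2y3 : Int.gcd (s2 : ℤ) y3 = 1 := by
    rw [Int.gcd_def, Int.natAbs_natCast, hy3abs]
    refine coprime_of_prime_fact fun p hp hd1 hd2 => ?_
    have f1 := hp.factorization_pos_of_dvd hs2pos.ne' hd1
    have f2 := hp.factorization_pos_of_dvd hY3pos hd2
    rcases (key p hp).2.2.2.2.2.2.2.2.2.2.2.2.2.2.2.2.2.2.1 with h | h <;> omega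
  have hgs3y1 : Int.gcd (s3 : ℤ) y1 = 1 := by
    rw [Int.gcd_def, Int.natAbs_natCast, hy1abs]
    refine coprime_of_prime_fact fun p hp hd1 hd2 => ?_
    have f1 := hp.factorization_pos_of_dvd hs3pos.ne' hd1
    have f2 := hp.factorization_pos_of_dvd hY1pos hd2
    rcases (key p hp).2.2.2.2.2.2.2.2.2.2.2.2.2.2.2.2.2.2.2.1 with h | h <;> omega
  have hgs3y2 : Int.gcd (s3 : ℤ) y2 = 1 := by
    rw [Int.gcd_def, Int.natAbs_natCast, hy2abs]
    refine coprime_of_prime_fact fun p hp hd1 hd2 => ?_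
    have f1 := hp.factorization_pos_of_dvd hs3pos.ne' hd1
    have f2 := hp.factorization_pos_of_dvd hY2pos hd2
    rcases (key p hp).2.2.2.2.2.2.2.2.2.2.2.2.2.2.2.2.2.2.2.2.1 with h | h <;> omega
  have hgu1 : Int.gcd (u1 : ℤ) (y1 * y2 * y3) = 1 := by
    rw [← hx4y, Int.gcd_def, Int.natAbs_natCast, ← hX4def]
    refine coprime_of_prime_fact fun p hp hd1 hd2 => ?_
    have f1 := hp.factorization_pos_of_dvd hu1pos.ne' hd1
    have f2 := hp.factorization_pos_of_dvd hX4pos hd2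
    rcases (key p hp).2.2.2.2.2.2.2.2.2.2.2.2.2.2.2.2.2.2.2.2.2.1 with h | h <;> omega
  have hgu2 : Int.gcd (u2 : ℤ) (y1 * y2 * y3) = 1 := by
    rw [← hx4y, Int.gcd_def, Int.natAbs_natCast, ← hX4def]
    refine coprime_of_prime_fact fun p hp hd1 hd2 => ?_
    have f1 := hp.factorization_pos_of_dvd hu2pos.ne' hd1
    have f2 := hp.factorization_pos_of_dvd hX4pos hd2
    rcases (key p hp).2.2.2.2.2.2.2.2.2.2.2.2.2.2.2.2.2.2.2.2.2.2.1 with h | h <;> omega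
  have hgu3 : Int.gcd (u3 : ℤ) (y1 * y2 * y3) = 1 := by
    rw [← hx4y, Int.gcd_def, Int.natAbs_natCast, ← hX4def]
    refine coprime_of_prime_fact fun p hp hd1 hd2 => ?_
    have f1 := hp.factorization_pos_of_dvd hu3pos.ne' hd1
    have f2 := hp.factorization_pos_of_dvd hX4pos hd2
    rcases (key p hp).2.2.2.2.2.2.2.2.2.2.2.2.2.2.2.2.2.2.2.2.2.2.2 with h | h <;> omega
  exact ⟨ε, s0, s1, s2, s3, u1, u2, u3, y1, y2, y3, hεor,
    hs0pos, hs1pos, hs2pos, hs3pos, hu1pos, hu2pos, hu3pos,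
    hy1ne, hy2ne, hy3ne, hgcdy, hmain, hsqu,
    hcop12, hcop13, hcop23, hcop1u2, hcop1u3, hcop2u1, hcop2u3, hcop3u1, hcop3u2,
    hgs0y1, hgs0y2, hgs0y3, hgs1y2, hgs1y3, hgs2y1, hgs2y3, hgs3y1, hgs3y2,
    hgu1, hgu2, hgu3, hx1final, hx2final, hx3final, hx4y⟩
end

section
/- Let h = (h1,h2,h3) ∈ ℤ³ with gcd(h1,h2,h3) = 1, and let W1, W2, W3 > 0 be real numbers. Then the number of w = (w1,w2,w3) ∈ ℤ³ with gcd(w1,w2,w3) = 1, h1·w1 + h2·w2 + h3·w3 = 0, and |w_i| ≤ W_i for i = 1,2,3, is at most 4 + 12π·W1·W2·W3 / max{|h1|·W1, |h2|·W2, |h3|·W3}. -/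
open MeasureTheory Set ENNReal

noncomputable def det2 (a b : ℝ × ℝ) : ℝ := a.1 * b.2 - a.2 * b.1

def UH (a : ℝ × ℝ) : Prop := 0 < a.2 ∨ (a.2 = 0 ∧ 0 < a.1)

lemma det2_id (a b c : ℝ × ℝ) :
    a.2 * det2 b c - b.2 * det2 a c + c.2 * det2 a b = 0 := by
  simp only [det2]; ring

lemma tr1 {a b c : ℝ × ℝ} (ha : 0 < a.2) (hb : 0 ≤ b.2) (hc : 0 ≤ c.2)
    (hab : 0 < det2 a b) (hbc : 0 < det2 b c) : 0 < det2 a c := by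
  by_contra h
  push_neg at h
  have := det2_id a b c
  nlinarith

lemma UH.nonneg {a : ℝ × ℝ} (h : UH a) : 0 ≤ a.2 := by
  rcases h with h | ⟨h, _⟩ <;> linarith

lemma tr2 {a b c : ℝ × ℝ} (ha : UH a) (hb : UH b) (hc : UH c)
    (hab : 0 < det2 a b) (hbc : 0 < det2 b c) : 0 < det2 a c := by
  rcases ha with ha | ⟨ha2, ha1⟩
  · exact tr1 ha hb.nonneg hc.nonneg hab hbc
  · -- a.2 = 0, a.1 > 0
    have hb2 : 0 < b.2 := by
      by_contra hb2
      push_neg at hb2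
      have : det2 a b = a.1 * b.2 := by simp [det2, ha2]
      nlinarith
    rcases hc with hc | ⟨hc2, hc1⟩
    · have : det2 a c = a.1 * c.2 := by simp [det2, ha2]
      nlinarith
    · exfalso
      have : det2 b c = -(b.2 * c.1) := by simp [det2, hc2]
      nlinarith

lemma exists_top {α : Type*} [DecidableEq α] (r : α → α → Prop) (Q : Finset α)
    (hne : Q.Nonempty)
    (htot : ∀ a ∈ Q, ∀ b ∈ Q, a ≠ b → r a b ∨ r b a)
    (htrans : ∀ a ∈ Q, ∀ b ∈ Q, ∀ c ∈ Q, r a b → r b c → r a c) :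
    ∃ m ∈ Q, ∀ q ∈ Q, q ≠ m → r q m := by
  classical
  induction Q using Finset.induction_on with
  | empty => exact absurd hne (by simp)
  | @insert a s ha ih =>
    rcases s.eq_empty_or_nonempty with rfl | hsne
    · exact ⟨a, by simp, by simp⟩
    · obtain ⟨m, hm, hmax⟩ := ih hsne
        (fun x hx y hy => htot x (Finset.mem_insert_of_mem hx) y (Finset.mem_insert_of_mem hy))
        (fun x hx y hy z hz => htrans x (Finset.mem_insert_of_mem hx)
          y (Finset.mem_insert_of_mem hy) z (Finset.mem_insert_of_mem hz))
      have hma : a ≠ m := fun h => ha (h ▸ hm)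
      have hmQ : m ∈ insert a s := Finset.mem_insert_of_mem hm
      have haQ : a ∈ insert a s := Finset.mem_insert_self a s
      rcases htot a haQ m hmQ hma with h1 | h1
      · refine ⟨m, hmQ, fun q hq hqm => ?_⟩
        rcases Finset.mem_insert.1 hq with rfl | hq'
        · exact h1
        · exact hmax q hq' hqm
      · refine ⟨a, haQ, fun q hq hqa => ?_⟩
        rcases Finset.mem_insert.1 hq with rfl | hq'
        · exact absurd rfl hqa
        · by_cases hqm : q = m
          · exact hqm ▸ h1
          · exact htrans q (Finset.mem_insert_of_mem hq') m hmQ a haQ (hmax q hq' hqm) h1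

lemma lemA (δ W2 W3 : ℝ) (hδ : 0 < δ) (hW2 : 0 < W2) (hW3 : 0 < W3) :
    ∀ Q : Finset (ℝ × ℝ),
    (∀ q ∈ Q, UH q ∧ |q.1| ≤ W2 ∧ |q.2| ≤ W3) →
    (∀ q ∈ Q, ∀ q' ∈ Q, q ≠ q' → δ ≤ |det2 q q'|) →
    Q.Nonempty →
    ∃ (U : Set (ℝ × ℝ)) (m : ℝ × ℝ), m ∈ Q ∧
      MeasurableSet U ∧
      U ⊆ Set.Icc (-(2*W2)) (2*W2) ×ˢ Set.Icc 0 (2*W3) ∧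
      (∀ x ∈ U, 0 < x.2 ∧ 0 < det2 x m) ∧
      (Q.card - 1 : ℕ) * ENNReal.ofReal δ ≤ volume U := by
  classical
  intro Q
  induction Q using Finset.strongInduction with
  | _ Q IH =>
  intro hbox hdet hne
  -- total order facts
  have htot : ∀ a ∈ Q, ∀ b ∈ Q, a ≠ b → 0 < det2 a b ∨ 0 < det2 b a := by
    intro a ha b hb hab
    have h := hdet a ha b hb hab
    have hne0 : det2 a b ≠ 0 := by
      intro h0; rw [h0] at h; simp at h; linarith
    rcases lt_or_gt_of_ne hne0 with h' | h'
    · right; have : det2 b a = -det2 a b := by simp [det2]; ring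
      rw [this]; linarith
    · left; exact h'
  have htrans : ∀ a ∈ Q, ∀ b ∈ Q, ∀ c ∈ Q, 0 < det2 a b → 0 < det2 b c → 0 < det2 a c := by
    intro a ha b hb c hc
    exact tr2 (hbox a ha).1 (hbox b hb).1 (hbox c hc).1
  obtain ⟨m, hmQ, hmax⟩ := exists_top _ Q hne htot htrans
  by_cases hQ1 : Q.erase m = ∅
  · -- singleton case
    have hcard : Q.card = 1 := by
      have : Q ⊆ {m} := by
        intro x hx
        by_contra hxm
        have : x ∈ Q.erase m := Finset.mem_erase.2 ⟨by simpa using hxm, hx⟩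
        simp [hQ1] at this
      have := Finset.card_le_card this
      have h1 : 1 ≤ Q.card := Finset.card_pos.2 hne
      simp at this; omega
    refine ⟨∅, m, hmQ, MeasurableSet.empty, by simp, by simp, ?_⟩
    simp [hcard]
  · set Q' := Q.erase m with hQ'def
    have hQ'ne : Q'.Nonempty := Finset.nonempty_of_ne_empty hQ1
    have hQ'sub : Q' ⊂ Q := Finset.erase_ssubset hmQ
    obtain ⟨U', m', hm'Q', hU'meas, hU'box, hU'sec, hU'vol⟩ :=
      IH Q' hQ'sub (fun q hq => hbox q (Finset.mem_of_mem_erase hq))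
        (fun q hq q' hq' => hdet q (Finset.mem_of_mem_erase hq) q' (Finset.mem_of_mem_erase hq'))
        hQ'ne
    have hm'Q : m' ∈ Q := Finset.mem_of_mem_erase hm'Q'
    have hm'm : m' ≠ m := Finset.ne_of_mem_erase hm'Q'
    have hdmm : 0 < det2 m' m := hmax m' hm'Q hm'm
    have hδmm : δ ≤ det2 m' m := by
      have := hdet m' hm'Q m hmQ hm'm
      rwa [abs_of_pos hdmm] at this
    -- the new parallelogram
    set f : (ℝ × ℝ) →ₗ[ℝ] (ℝ × ℝ) :=
      Matrix.toLin (Module.Basis.finTwoProd ℝ) (Module.Basis.finTwoProd ℝ) !![m'.1, m.1; m'.2, m.2] with hfdef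
    have hfapp : ∀ x : ℝ × ℝ, f x = (m'.1 * x.1 + m.1 * x.2, m'.2 * x.1 + m.2 * x.2) := by
      intro x; rw [hfdef, Matrix.toLin_finTwoProd_apply]
    have hfdet : LinearMap.det f = det2 m' m := by
      rw [hfdef, LinearMap.det_toLin, Matrix.det_fin_two_of]
      simp [det2]; ring
    set sq : Set (ℝ × ℝ) := Set.Ioo (0:ℝ) 1 ×ˢ Set.Ioo (0:ℝ) 1 with hsqdef
    set U₀ : Set (ℝ × ℝ) := f '' sq with hU₀def
    have hU₀vol : volume U₀ = ENNReal.ofReal (det2 m' m) := by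
      rw [hU₀def, Measure.addHaar_image_linearMap, hfdet, abs_of_pos hdmm, hsqdef]
      rw [show (volume : Measure (ℝ × ℝ)) = (volume : Measure ℝ).prod volume from Measure.volume_eq_prod ℝ ℝ]
      rw [Measure.prod_prod]
      simp [Real.volume_Ioo]
    -- measurability of U₀
    have hfdetne : LinearMap.det f ≠ 0 := by rw [hfdet]; exact ne_of_gt hdmm
    have hU₀meas : MeasurableSet U₀ := by
      let g := (LinearMap.equivOfDetNeZero f hfdetne).toContinuousLinearEquiv
      have : U₀ = g.symm ⁻¹' sq := by
        rw [hU₀def, ← ContinuousLinearEquiv.image_eq_preimage_symm]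
        rfl
      rw [this]
      exact (measurableSet_Ioo.prod measurableSet_Ioo).preimage g.symm.continuous.measurable
    -- membership description
    have hU₀mem : ∀ x ∈ U₀, ∃ s t : ℝ, 0 < s ∧ s < 1 ∧ 0 < t ∧ t < 1 ∧
        x.1 = s * m'.1 + t * m.1 ∧ x.2 = s * m'.2 + t * m.2 := by
      rintro x ⟨⟨s, t⟩, ⟨hs, ht⟩, rfl⟩
      rw [hfapp]
      exact ⟨s, t, hs.1, hs.2, ht.1, ht.2, by ring, by ring⟩
    have hm'UH := (hbox m' hm'Q).1
    have hmUH := (hbox m hmQ).1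
    have hm'2 : 0 ≤ m'.2 := hm'UH.nonneg
    have hm2 : 0 ≤ m.2 := hmUH.nonneg
    have hnotboth : 0 < m'.2 ∨ 0 < m.2 := by
      by_contra h
      push_neg at h
      have h1 : m'.2 = 0 := le_antisymm h.1 hm'2
      have h2 : m.2 = 0 := le_antisymm h.2 hm2
      have : det2 m' m = 0 := by simp [det2, h1, h2]
      rw [this] at hdmm; exact lt_irrefl 0 hdmm
    have hm'b := (hbox m' hm'Q).2
    have hmb := (hbox m hmQ).2
    -- properties of U₀ points
    have hU₀prop : ∀ x ∈ U₀, (0 < x.2 ∧ 0 < det2 x m) ∧ det2 x m' < 0 ∧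
        x ∈ Set.Icc (-(2*W2)) (2*W2) ×ˢ Set.Icc 0 (2*W3) := by
      intro x hx
      obtain ⟨s, t, hs0, hs1, ht0, ht1, hx1, hx2⟩ := hU₀mem x hx
      have hx2pos : 0 < x.2 := by
        rw [hx2]
        rcases hnotboth with h | h
        · have : 0 < s * m'.2 := mul_pos hs0 h
          nlinarith
        · have : 0 < t * m.2 := mul_pos ht0 h
          nlinarith
      have hdxm : det2 x m = s * det2 m' m := by simp [det2, hx1, hx2]; ring
      have hdxm' : det2 x m' = -(t * det2 m' m) := by simp [det2, hx1, hx2]; ring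
      refine ⟨⟨hx2pos, ?_⟩, ?_, ?_⟩
      · rw [hdxm]; exact mul_pos hs0 hdmm
      · rw [hdxm']; simp; exact mul_pos ht0 hdmm
      · constructor
        · simp only [Set.mem_Icc]
          have h1 := abs_le.1 hm'b.1
          have h2 := abs_le.1 hmb.1
          constructor <;> rw [hx1] <;> nlinarith
        · simp only [Set.mem_Icc]
          have h1 := abs_le.1 hm'b.2
          have h2 := abs_le.1 hmb.2
          constructor <;> rw [hx2] <;> nlinarith
    -- disjointness
    have hdisj : Disjoint U' U₀ := by
      rw [Set.disjoint_left]
      intro x hxU' hxU₀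
      have h1 : 0 < det2 x m' := (hU'sec x hxU').2
      have h2 : det2 x m' < 0 := (hU₀prop x hxU₀).2.1
      linarith
    refine ⟨U' ∪ U₀, m, hmQ, hU'meas.union hU₀meas, ?_, ?_, ?_⟩
    · intro x hx
      rcases hx with hx | hx
      · exact hU'box hx
      · exact (hU₀prop x hx).2.2
    · intro x hx
      rcases hx with hx | hx
      · refine ⟨(hU'sec x hx).1, ?_⟩
        exact tr1 (hU'sec x hx).1 hm'2 hm2 (hU'sec x hx).2 hdmm
      · exact (hU₀prop x hx).1
    · rw [measure_union hdisj hU₀meas]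
      have hcard : Q.card - 1 = (Q'.card - 1) + 1 := by
        have h1 : Q'.card = Q.card - 1 := Finset.card_erase_of_mem hmQ
        have h2 : 2 ≤ Q.card := by
          have := Finset.card_pos.2 hQ'ne
          omega
        omega
      have hU₀big : ENNReal.ofReal δ ≤ volume U₀ := by
        rw [hU₀vol]
        exact ENNReal.ofReal_le_ofReal hδmm
      calc (Q.card - 1 : ℕ) * ENNReal.ofReal δ
          = (Q'.card - 1 : ℕ) * ENNReal.ofReal δ + ENNReal.ofReal δ := by
            rw [hcard]; push_cast; ring
        _ ≤ volume U' + volume U₀ := add_le_add hU'vol hU₀big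

lemma core (δ W2 W3 : ℝ) (hδ : 0 < δ) (hW2 : 0 < W2) (hW3 : 0 < W3)
    (Q : Finset (ℝ × ℝ))
    (hbox : ∀ q ∈ Q, UH q ∧ |q.1| ≤ W2 ∧ |q.2| ≤ W3)
    (hdet : ∀ q ∈ Q, ∀ q' ∈ Q, q ≠ q' → δ ≤ |det2 q q'|) :
    ((Q.card : ℝ) - 1) * δ ≤ 8 * W2 * W3 := by
  rcases Q.eq_empty_or_nonempty with rfl | hne
  · simp; nlinarith
  · obtain ⟨U, m, _, hUmeas, hUbox, _, hUvol⟩ := lemA δ W2 W3 hδ hW2 hW3 Q hbox hdet hne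
    have hboxvol : volume (Set.Icc (-(2*W2)) (2*W2) ×ˢ Set.Icc (0:ℝ) (2*W3))
        = ENNReal.ofReal (4*W2) * ENNReal.ofReal (2*W3) := by
      rw [show (volume : Measure (ℝ × ℝ)) = (volume : Measure ℝ).prod volume from
        Measure.volume_eq_prod ℝ ℝ, Measure.prod_prod]
      rw [Real.volume_Icc, Real.volume_Icc]
      congr 1 <;> congr 1 <;> ring
    have h1 : ((Q.card - 1 : ℕ) : ℝ≥0∞) * ENNReal.ofReal δ ≤ ENNReal.ofReal (8 * W2 * W3) := by
      refine le_trans hUvol ?_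
      refine le_trans (measure_mono hUbox) ?_
      rw [hboxvol, ← ENNReal.ofReal_mul (by linarith)]
      exact ENNReal.ofReal_le_ofReal (by nlinarith)
    have h2 : ENNReal.ofReal (((Q.card - 1 : ℕ) : ℝ) * δ) ≤ ENNReal.ofReal (8 * W2 * W3) := by
      rwa [ENNReal.ofReal_mul (by positivity), ENNReal.ofReal_natCast]
    have h3 : ((Q.card - 1 : ℕ) : ℝ) * δ ≤ 8 * W2 * W3 :=
      le_trans (ENNReal.ofReal_le_ofReal_iff (by nlinarith) |>.1 h2) (le_refl _)
    have h4 : ((Q.card : ℝ) - 1) ≤ ((Q.card - 1 : ℕ) : ℝ) := by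
      have : 1 ≤ Q.card := Finset.card_pos.2 hne
      rw [Nat.cast_sub this]; simp
    nlinarith

lemma bezout3 {a b c : ℤ} (h : Int.gcd (Int.gcd a b) c = 1) :
    ∃ x y z : ℤ, a * x + b * y + c * z = 1 := by
  have h1 : ((Int.gcd (Int.gcd a b) c : ℤ)) = (Int.gcd a b : ℤ) * Int.gcdA (Int.gcd a b) c
      + c * Int.gcdB (Int.gcd a b) c := Int.gcd_eq_gcd_ab _ _
  have h2 : ((Int.gcd a b : ℤ)) = a * Int.gcdA a b + b * Int.gcdB a b := Int.gcd_eq_gcd_ab _ _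
  rw [h] at h1
  refine ⟨Int.gcdA a b * Int.gcdA (Int.gcd a b) c, Int.gcdB a b * Int.gcdA (Int.gcd a b) c,
    Int.gcdB (Int.gcd a b) c, ?_⟩
  push_cast at h1
  linear_combination (-1 : ℤ) * h1 - Int.gcdA (Int.gcd a b : ℤ) c * h2

-- if two primitive integer vectors have all 2x2 minors zero, they are equal up to sign
lemma parallel_primitive {a1 a2 a3 b1 b2 b3 : ℤ}
    (ha : Int.gcd (Int.gcd a1 a2) a3 = 1) (hb : Int.gcd (Int.gcd b1 b2) b3 = 1)
    (m12 : a1 * b2 = a2 * b1) (m13 : a1 * b3 = a3 * b1) (m23 : a2 * b3 = a3 * b2) :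
    (b1 = a1 ∧ b2 = a2 ∧ b3 = a3) ∨ (b1 = -a1 ∧ b2 = -a2 ∧ b3 = -a3) := by
  obtain ⟨x, y, z, hxyz⟩ := bezout3 ha
  set m : ℤ := b1 * x + b2 * y + b3 * z with hm
  have e1 : b1 = m * a1 := by rw [hm]; linear_combination (-b1) * hxyz - y * m12 - z * m13
  have e2 : b2 = m * a2 := by rw [hm]; linear_combination (-b2) * hxyz + x * m12 - z * m23
  have e3 : b3 = m * a3 := by rw [hm]; linear_combination (-b3) * hxyz + x * m13 + y * m23
  have hgcd : Int.gcd (Int.gcd b1 b2) b3 = m.natAbs * Int.gcd (Int.gcd a1 a2) a3 := by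
    rw [e1, e2, e3, Int.gcd_mul_left]
    simp [Int.gcd_def, Int.natAbs_mul, Nat.gcd_mul_left, Int.natAbs_abs]
  rw [hb, ha, mul_one] at hgcd
  rcases Int.natAbs_eq_iff.1 hgcd.symm with hm1 | hm1
  · left
    rw [hm1] at e1 e2 e3
    simp at e1 e2 e3
    exact ⟨e1, e2, e3⟩
  · right
    rw [hm1] at e1 e2 e3
    simp at e1 e2 e3
    refine ⟨by linarith, by linarith, by linarith⟩

def PH (w : ℤ × ℤ × ℤ) : Prop := 0 < w.2.2 ∨ (w.2.2 = 0 ∧ 0 < w.2.1)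

lemma main_lemma (h1 h2 h3 : ℤ) (hprim : Int.gcd (Int.gcd h1 h2) h3 = 1) (h1ne : h1 ≠ 0)
    (W1 W2 W3 : ℝ) (hW2 : 0 < W2) (hW3 : 0 < W3) :
    (Set.ncard {w : ℤ × ℤ × ℤ |
        Int.gcd (Int.gcd w.1 w.2.1) w.2.2 = 1 ∧
        h1 * w.1 + h2 * w.2.1 + h3 * w.2.2 = 0 ∧
        ((|w.1| : ℤ) : ℝ) ≤ W1 ∧ ((|w.2.1| : ℤ) : ℝ) ≤ W2 ∧
        ((|w.2.2| : ℤ) : ℝ) ≤ W3} : ℝ) ≤ 2 + 16 * W2 * W3 / ((|h1| : ℤ) : ℝ) := by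
  set S : Set (ℤ × ℤ × ℤ) := {w : ℤ × ℤ × ℤ |
        Int.gcd (Int.gcd w.1 w.2.1) w.2.2 = 1 ∧
        h1 * w.1 + h2 * w.2.1 + h3 * w.2.2 = 0 ∧
        ((|w.1| : ℤ) : ℝ) ≤ W1 ∧ ((|w.2.1| : ℤ) : ℝ) ≤ W2 ∧
        ((|w.2.2| : ℤ) : ℝ) ≤ W3} with hSdef
  -- finiteness
  have hSfin : S.Finite := by
    apply Set.Finite.subset
      (Set.Finite.prod (Set.finite_Icc (-⌈W1⌉) ⌈W1⌉)
        (Set.Finite.prod (Set.finite_Icc (-⌈W2⌉) ⌈W2⌉) (Set.finite_Icc (-⌈W3⌉) ⌈W3⌉)))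
    rintro ⟨w1, w2, w3⟩ ⟨-, -, hb1, hb2, hb3⟩
    have c1 : |w1| ≤ ⌈W1⌉ := by
      have := le_trans hb1 (Int.le_ceil W1); exact_mod_cast this
    have c2 : |w2| ≤ ⌈W2⌉ := by
      have := le_trans hb2 (Int.le_ceil W2); exact_mod_cast this
    have c3 : |w3| ≤ ⌈W3⌉ := by
      have := le_trans hb3 (Int.le_ceil W3); exact_mod_cast this
    exact ⟨abs_le.1 c1, abs_le.1 c2, abs_le.1 c3⟩
  -- elements have (w2, w3) ≠ (0,0)
  have hnz : ∀ w ∈ S, ¬(w.2.1 = 0 ∧ w.2.2 = 0) := by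
    rintro ⟨w1, w2, w3⟩ ⟨hg, he, -⟩ ⟨rfl, rfl⟩
    simp only at he hg
    have : w1 = 0 := by
      have : h1 * w1 = 0 := by linarith
      exact (mul_eq_zero.1 this).resolve_left h1ne
    rw [this] at hg
    simp [Int.gcd] at hg
  -- closure under negation
  have hneg : ∀ w ∈ S, -w ∈ S := by
    rintro ⟨w1, w2, w3⟩ ⟨hg, he, hb1, hb2, hb3⟩
    refine ⟨?_, ?_, ?_, ?_, ?_⟩ <;>
      simp only [Prod.fst_neg, Prod.snd_neg] at *
    · simpa [Int.gcd_def, Int.natAbs_neg] using hg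
    · linarith
    · simpa using hb1
    · simpa using hb2
    · simpa using hb3
  -- split into positive and negative halves
  classical
  set P : Set (ℤ × ℤ × ℤ) := {w ∈ S | PH w} with hPdef
  set N : Set (ℤ × ℤ × ℤ) := {w ∈ S | ¬ PH w} with hNdef
  have hPfin : P.Finite := hSfin.subset (fun w hw => hw.1)
  have hNfin : N.Finite := hSfin.subset (fun w hw => hw.1)
  have hSPN : S = P ∪ N := by
    ext w; constructor
    · intro hw; by_cases h : PH w
      · exact Or.inl ⟨hw, h⟩
      · exact Or.inr ⟨hw, h⟩
    · rintro (⟨hw, -⟩ | ⟨hw, -⟩) <;> exact hw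
  have hdisjPN : Disjoint P N := by
    rw [Set.disjoint_left]
    rintro w ⟨-, hw⟩ ⟨-, hw'⟩
    exact hw' hw
  have hNP : N = Neg.neg '' P := by
    ext w
    constructor
    · rintro ⟨hwS, hwPH⟩
      refine ⟨-w, ⟨hneg w hwS, ?_⟩, by simp⟩
      have hz := hnz w hwS
      simp only [PH, Prod.fst_neg, Prod.snd_neg, Prod.snd] at hwPH ⊢
      omega
    · rintro ⟨v, ⟨hvS, hvPH⟩, rfl⟩
      refine ⟨hneg v hvS, ?_⟩
      simp only [PH, Prod.fst_neg, Prod.snd_neg] at hvPH ⊢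
      omega
  have hcardS : S.ncard = 2 * P.ncard := by
    rw [hSPN, Set.ncard_union_eq hdisjPN hPfin hNfin, hNP,
      Set.ncard_image_of_injective _ neg_injective]
    ring
  obtain ⟨x, y, z, hbez⟩ := bezout3 hprim
  -- key integer estimate for minors
  have hkey : ∀ w ∈ P, ∀ w' ∈ P, w ≠ w' →
      (|h1| : ℤ) ≤ |w.2.1 * w'.2.2 - w.2.2 * w'.2.1| := by
    rintro w ⟨hwS, hwPH⟩ w' ⟨hw'S, hw'PH⟩ hne'
    obtain ⟨hg, he, -⟩ := hwS
    obtain ⟨hg', he', -⟩ := hw'S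
    set D : ℤ := w.2.1 * w'.2.2 - w.2.2 * w'.2.1 with hD
    have k2 : h2 * D = h1 * (w'.1 * w.2.2 - w.1 * w'.2.2) := by
      linear_combination w'.2.2 * he - w.2.2 * he'
    have k3 : h3 * D = h1 * (w.1 * w'.2.1 - w.2.1 * w'.1) := by
      linear_combination (-w'.2.1) * he + w.2.1 * he'
    have hdvd : h1 ∣ D := by
      refine ⟨x * D + y * (w'.1 * w.2.2 - w.1 * w'.2.2) + z * (w.1 * w'.2.1 - w.2.1 * w'.1), ?_⟩
      linear_combination (-D) * hbez + y * k2 + z * k3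
    have hDne : D ≠ 0 := by
      intro hD0
      have hA : w'.1 * w.2.2 - w.1 * w'.2.2 = 0 := by
        have hh : h1 * (w'.1 * w.2.2 - w.1 * w'.2.2) = 0 := by rw [← k2, hD0, mul_zero]
        exact (mul_eq_zero.1 hh).resolve_left h1ne
      have hB : w.1 * w'.2.1 - w.2.1 * w'.1 = 0 := by
        have hh : h1 * (w.1 * w'.2.1 - w.2.1 * w'.1) = 0 := by rw [← k3, hD0, mul_zero]
        exact (mul_eq_zero.1 hh).resolve_left h1ne
      have m12 : w.1 * w'.2.1 = w.2.1 * w'.1 := by linarith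
      have m13 : w.1 * w'.2.2 = w.2.2 * w'.1 := by linarith
      have m23 : w.2.1 * w'.2.2 = w.2.2 * w'.2.1 := by
        have := hD ▸ hD0; linarith [this]
      rcases parallel_primitive hg hg' m12 m13 m23 with ⟨e1, e2, e3⟩ | ⟨e1, e2, e3⟩
      · exact hne' (Prod.ext_iff.2 ⟨e1.symm, Prod.ext_iff.2 ⟨e2.symm, e3.symm⟩⟩)
      · simp only [PH] at hwPH hw'PH
        omega
    exact Int.le_of_dvd (abs_pos.2 hDne) ((abs_dvd _ _).mpr ((dvd_abs _ _).mpr hdvd))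
  -- the planar point set
  set qm : ℤ × ℤ × ℤ → ℝ × ℝ := fun w => ((w.2.1 : ℝ), (w.2.2 : ℝ)) with hqm
  have hinj : Set.InjOn qm P := by
    rintro w ⟨hwS, -⟩ w' ⟨hw'S, -⟩ hqq
    obtain ⟨-, he, -⟩ := hwS
    obtain ⟨-, he', -⟩ := hw'S
    simp only [hqm, Prod.mk.injEq] at hqq
    have h21 : w.2.1 = w'.2.1 := by exact_mod_cast hqq.1
    have h22 : w.2.2 = w'.2.2 := by exact_mod_cast hqq.2
    have h11 : w.1 = w'.1 := by
      have : h1 * w.1 = h1 * w'.1 := by rw [h21, h22] at he; linarith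
      exact mul_left_cancel₀ h1ne this
    exact Prod.ext_iff.2 ⟨h11, Prod.ext_iff.2 ⟨h21, h22⟩⟩
  set Q : Finset (ℝ × ℝ) := hPfin.toFinset.image qm with hQ
  have hQcard : Q.card = P.ncard := by
    rw [hQ, Finset.card_image_of_injOn (by
      intro a ha b hb hab
      exact hinj (hPfin.mem_toFinset.1 ha) (hPfin.mem_toFinset.1 hb) hab)]
    exact (Set.ncard_eq_toFinset_card P hPfin).symm
  set δ : ℝ := ((|h1| : ℤ) : ℝ) with hδdef
  have hδ : 0 < δ := by
    rw [hδdef]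
    exact_mod_cast abs_pos.2 h1ne
  have hcore : ((Q.card : ℝ) - 1) * δ ≤ 8 * W2 * W3 := by
    apply core δ W2 W3 hδ hW2 hW3 Q
    · rintro p hp
      obtain ⟨w, hw, rfl⟩ := Finset.mem_image.1 hp
      have hwP := hPfin.mem_toFinset.1 hw
      obtain ⟨⟨-, -, -, hb2, hb3⟩, hwPH⟩ := hwP
      refine ⟨?_, ?_, ?_⟩
      · simp only [PH] at hwPH
        simp only [UH, hqm]
        rcases hwPH with h | ⟨h, h'⟩
        · left; exact_mod_cast h
        · right
          refine ⟨by exact_mod_cast congrArg (Int.cast : ℤ → ℝ) h, by exact_mod_cast h'⟩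
      · simp only [hqm]
        rw [← Int.cast_abs]; exact hb2
      · simp only [hqm]
        rw [← Int.cast_abs]; exact hb3
    · rintro p hp p' hp' hpp'
      obtain ⟨w, hw, rfl⟩ := Finset.mem_image.1 hp
      obtain ⟨w', hw', rfl⟩ := Finset.mem_image.1 hp'
      have hwP := hPfin.mem_toFinset.1 hw
      have hw'P := hPfin.mem_toFinset.1 hw'
      have hww' : w ≠ w' := fun h => hpp' (h ▸ rfl)
      have := hkey w hwP w' hw'P hww'
      have hcast : det2 (qm w) (qm w') = ((w.2.1 * w'.2.2 - w.2.2 * w'.2.1 : ℤ) : ℝ) := by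
        simp only [det2, hqm]; push_cast; ring
      rw [hδdef, hcast, ← Int.cast_abs]
      exact_mod_cast this
  -- conclude
  have hfinal : (S.ncard : ℝ) = 2 * (Q.card : ℝ) := by
    rw [hcardS, hQcard]; push_cast; ring
  rw [hfinal]
  have h8 : (Q.card : ℝ) - 1 ≤ 8 * W2 * W3 / δ := (le_div_iff₀ hδ).2 hcore
  have h16 : 16 * W2 * W3 / δ = 2 * (8 * W2 * W3 / δ) := by ring
  linarith

lemma gcd3_swap12 (a b c : ℤ) : Int.gcd (Int.gcd b a) c = Int.gcd (Int.gcd a b) c := by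
  rw [Int.gcd_comm b a]

lemma gcd3_swap13 (a b c : ℤ) : Int.gcd (Int.gcd c b) a = Int.gcd (Int.gcd a b) c := by
  simp only [Int.gcd_def, Int.natAbs_cast]
  rw [Nat.gcd_comm c.natAbs b.natAbs, Nat.gcd_comm _ a.natAbs, ← Nat.gcd_assoc]

lemma final_step (H Wi Wj Wk P Mx : ℝ) (hH : 0 < H) (hWi : 0 < Wi) (hWj : 0 < Wj)
    (hWk : 0 < Wk) (hP : P = Wi * Wj * Wk) (hMx : Mx = H * Wi) :
    2 + 16 * Wj * Wk / H ≤ 4 + 12 * Real.pi * P / Mx := by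
  have hπ : (16:ℝ) ≤ 12 * Real.pi := by nlinarith [Real.pi_gt_three]
  have hMpos : 0 < Mx := by rw [hMx]; positivity
  have h1 : 16 * Wj * Wk / H = 16 * P / Mx := by
    rw [hP, hMx, div_eq_div_iff hH.ne' (by positivity : (0:ℝ) < H * Wi).ne']; ring
  rw [h1]
  have hPpos : 0 < P := by rw [hP]; positivity
  have h2 : 16 * P / Mx ≤ 12 * Real.pi * P / Mx := by gcongr
  linarith

theorem primitive_points_on_plane_in_box
    (h1 h2 h3 : ℤ) (hprim : Int.gcd (Int.gcd h1 h2) h3 = 1)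
    (W1 W2 W3 : ℝ) (hW1 : 0 < W1) (hW2 : 0 < W2) (hW3 : 0 < W3) :
    (Set.ncard {w : ℤ × ℤ × ℤ |
        Int.gcd (Int.gcd w.1 w.2.1) w.2.2 = 1 ∧
        h1 * w.1 + h2 * w.2.1 + h3 * w.2.2 = 0 ∧
        ((|w.1| : ℤ) : ℝ) ≤ W1 ∧ ((|w.2.1| : ℤ) : ℝ) ≤ W2 ∧
        ((|w.2.2| : ℤ) : ℝ) ≤ W3} : ℝ) ≤
      4 + 12 * Real.pi * (W1 * W2 * W3) /
        max (max (((|h1| : ℤ) : ℝ) * W1) (((|h2| : ℤ) : ℝ) * W2)) (((|h3| : ℤ) : ℝ) * W3) := by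
  classical
  set A : ℝ := ((|h1| : ℤ) : ℝ) * W1 with hA
  set B : ℝ := ((|h2| : ℤ) : ℝ) * W2 with hB
  set C : ℝ := ((|h3| : ℤ) : ℝ) * W3 with hC
  have hAnn : 0 ≤ A := by rw [hA]; positivity
  have hBnn : 0 ≤ B := by rw [hB]; positivity
  have hCnn : 0 ≤ C := by rw [hC]; positivity
  have hAM : A ≤ max (max A B) C := le_trans (le_max_left A B) (le_max_left _ C)
  have hBM : B ≤ max (max A B) C := le_trans (le_max_right A B) (le_max_left _ C)
  have hCM : C ≤ max (max A B) C := le_max_right _ C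
  have hz : ¬(h1 = 0 ∧ h2 = 0 ∧ h3 = 0) := by
    rintro ⟨rfl, rfl, rfl⟩
    simp [Int.gcd] at hprim
  have habs0 : ∀ (h : ℤ) (W : ℝ), 0 < W → ((|h| : ℤ) : ℝ) * W = 0 → h = 0 := by
    intro h W hW hprod
    rcases mul_eq_zero.1 hprod with hc | hc
    · exact_mod_cast abs_eq_zero.1 (by exact_mod_cast hc)
    · linarith
  -- if the max equals one of the entries which is zero, everything vanishes: contradiction
  have hmaxzero : max (max A B) C ≠ 0 := by
    intro h0
    apply hz
    refine ⟨habs0 h1 W1 hW1 ?_, habs0 h2 W2 hW2 ?_, habs0 h3 W3 hW3 ?_⟩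
    · rw [← hA]; linarith [hAM]
    · rw [← hB]; linarith [hBM]
    · rw [← hC]; linarith [hCM]
  rcases max_choice (max A B) C with hM | hM
  · rcases max_choice A B with hM2 | hM2
    · -- A is the max
      have hMA : max (max A B) C = A := by rw [hM, hM2]
      have h1ne : h1 ≠ 0 := by
        intro h10
        apply hmaxzero
        rw [hMA, hA, h10]; simp
      calc (Set.ncard {w : ℤ × ℤ × ℤ |
            Int.gcd (Int.gcd w.1 w.2.1) w.2.2 = 1 ∧
            h1 * w.1 + h2 * w.2.1 + h3 * w.2.2 = 0 ∧
            ((|w.1| : ℤ) : ℝ) ≤ W1 ∧ ((|w.2.1| : ℤ) : ℝ) ≤ W2 ∧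
            ((|w.2.2| : ℤ) : ℝ) ≤ W3} : ℝ)
          ≤ 2 + 16 * W2 * W3 / ((|h1| : ℤ) : ℝ) :=
            main_lemma h1 h2 h3 hprim h1ne W1 W2 W3 hW2 hW3
        _ ≤ 4 + 12 * Real.pi * (W1 * W2 * W3) / max (max A B) C := by
            apply final_step _ W1 W2 W3 _ _ _ hW1 hW2 hW3 rfl
            · rw [hMA, hA]
            · have : (0:ℤ) < |h1| := abs_pos.2 h1ne
              exact_mod_cast this
        _ = 4 + 12 * Real.pi * (W1 * W2 * W3) /
            max (max (((|h1| : ℤ) : ℝ) * W1) (((|h2| : ℤ) : ℝ) * W2)) (((|h3| : ℤ) : ℝ) * W3) := by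
            rw [hA, hB, hC]
    · -- B is the max
      have hMB : max (max A B) C = B := by rw [hM, hM2]
      have h2ne : h2 ≠ 0 := by
        intro h20
        apply hmaxzero
        rw [hMB, hB, h20]; simp
      -- permuted set
      have himg : {w : ℤ × ℤ × ℤ |
            Int.gcd (Int.gcd w.1 w.2.1) w.2.2 = 1 ∧
            h1 * w.1 + h2 * w.2.1 + h3 * w.2.2 = 0 ∧
            ((|w.1| : ℤ) : ℝ) ≤ W1 ∧ ((|w.2.1| : ℤ) : ℝ) ≤ W2 ∧
            ((|w.2.2| : ℤ) : ℝ) ≤ W3}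
          = (fun w : ℤ × ℤ × ℤ => (w.2.1, w.1, w.2.2)) '' {w : ℤ × ℤ × ℤ |
            Int.gcd (Int.gcd w.1 w.2.1) w.2.2 = 1 ∧
            h2 * w.1 + h1 * w.2.1 + h3 * w.2.2 = 0 ∧
            ((|w.1| : ℤ) : ℝ) ≤ W2 ∧ ((|w.2.1| : ℤ) : ℝ) ≤ W1 ∧
            ((|w.2.2| : ℤ) : ℝ) ≤ W3} := by
        ext w
        obtain ⟨a, b, c⟩ := w
        simp only [Set.mem_setOf_eq, Set.mem_image]
        constructor
        · rintro ⟨hg, he, hb1, hb2, hb3⟩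
          exact ⟨(b, a, c), ⟨gcd3_swap12 a b c ▸ hg, by linarith, hb2, hb1, hb3⟩, rfl⟩
        · rintro ⟨⟨p, q, r⟩, ⟨hg, he, hb1, hb2, hb3⟩, heq⟩
          obtain ⟨rfl, rfl, rfl⟩ : q = a ∧ p = b ∧ r = c := by
            simpa [Prod.ext_iff] using heq
          exact ⟨gcd3_swap12 _ _ _ ▸ hg, by linarith, hb2, hb1, hb3⟩
      have hinj : Function.Injective (fun w : ℤ × ℤ × ℤ => (w.2.1, w.1, w.2.2)) :=
        Function.Involutive.injective (fun ⟨a, b, c⟩ => rfl)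
      rw [himg, Set.ncard_image_of_injective _ hinj]
      calc (Set.ncard {w : ℤ × ℤ × ℤ |
            Int.gcd (Int.gcd w.1 w.2.1) w.2.2 = 1 ∧
            h2 * w.1 + h1 * w.2.1 + h3 * w.2.2 = 0 ∧
            ((|w.1| : ℤ) : ℝ) ≤ W2 ∧ ((|w.2.1| : ℤ) : ℝ) ≤ W1 ∧
            ((|w.2.2| : ℤ) : ℝ) ≤ W3} : ℝ)
          ≤ 2 + 16 * W1 * W3 / ((|h2| : ℤ) : ℝ) :=
            main_lemma h2 h1 h3 (gcd3_swap12 h1 h2 h3 ▸ hprim) h2ne W2 W1 W3 hW1 hW3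
        _ ≤ 4 + 12 * Real.pi * (W1 * W2 * W3) / max (max A B) C := by
            apply final_step _ W2 W1 W3 _ _ _ hW2 hW1 hW3 (by ring)
            · rw [hMB, hB]
            · have : (0:ℤ) < |h2| := abs_pos.2 h2ne
              exact_mod_cast this
        _ = 4 + 12 * Real.pi * (W1 * W2 * W3) /
            max (max (((|h1| : ℤ) : ℝ) * W1) (((|h2| : ℤ) : ℝ) * W2)) (((|h3| : ℤ) : ℝ) * W3) := by
            rw [hA, hB, hC]
  · -- C is the max
    have hMC : max (max A B) C = C := hM
    have h3ne : h3 ≠ 0 := by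
      intro h30
      apply hmaxzero
      rw [hMC, hC, h30]; simp
    have himg : {w : ℤ × ℤ × ℤ |
          Int.gcd (Int.gcd w.1 w.2.1) w.2.2 = 1 ∧
          h1 * w.1 + h2 * w.2.1 + h3 * w.2.2 = 0 ∧
          ((|w.1| : ℤ) : ℝ) ≤ W1 ∧ ((|w.2.1| : ℤ) : ℝ) ≤ W2 ∧
          ((|w.2.2| : ℤ) : ℝ) ≤ W3}
        = (fun w : ℤ × ℤ × ℤ => (w.2.2, w.2.1, w.1)) '' {w : ℤ × ℤ × ℤ |
          Int.gcd (Int.gcd w.1 w.2.1) w.2.2 = 1 ∧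
          h3 * w.1 + h2 * w.2.1 + h1 * w.2.2 = 0 ∧
          ((|w.1| : ℤ) : ℝ) ≤ W3 ∧ ((|w.2.1| : ℤ) : ℝ) ≤ W2 ∧
          ((|w.2.2| : ℤ) : ℝ) ≤ W1} := by
      ext w
      obtain ⟨a, b, c⟩ := w
      simp only [Set.mem_setOf_eq, Set.mem_image]
      constructor
      · rintro ⟨hg, he, hb1, hb2, hb3⟩
        exact ⟨(c, b, a), ⟨gcd3_swap13 a b c ▸ hg, by linarith, hb3, hb2, hb1⟩, rfl⟩
      · rintro ⟨⟨p, q, r⟩, ⟨hg, he, hb1, hb2, hb3⟩, heq⟩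
        obtain ⟨rfl, rfl, rfl⟩ : r = a ∧ q = b ∧ p = c := by
          simpa [Prod.ext_iff] using heq
        exact ⟨gcd3_swap13 _ _ _ ▸ hg, by linarith, hb3, hb2, hb1⟩
    have hinj : Function.Injective (fun w : ℤ × ℤ × ℤ => (w.2.2, w.2.1, w.1)) :=
      Function.Involutive.injective (fun ⟨a, b, c⟩ => rfl)
    rw [himg, Set.ncard_image_of_injective _ hinj]
    calc (Set.ncard {w : ℤ × ℤ × ℤ |
          Int.gcd (Int.gcd w.1 w.2.1) w.2.2 = 1 ∧
          h3 * w.1 + h2 * w.2.1 + h1 * w.2.2 = 0 ∧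
          ((|w.1| : ℤ) : ℝ) ≤ W3 ∧ ((|w.2.1| : ℤ) : ℝ) ≤ W2 ∧
          ((|w.2.2| : ℤ) : ℝ) ≤ W1} : ℝ)
        ≤ 2 + 16 * W2 * W1 / ((|h3| : ℤ) : ℝ) :=
          main_lemma h3 h2 h1 (gcd3_swap13 h1 h2 h3 ▸ hprim) h3ne W3 W2 W1 hW2 hW1
      _ ≤ 4 + 12 * Real.pi * (W1 * W2 * W3) / max (max A B) C := by
          apply final_step _ W3 W2 W1 _ _ _ hW3 hW2 hW1 (by ring)
          · rw [hMC, hC]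
          · have : (0:ℤ) < |h3| := abs_pos.2 h3ne
            exact_mod_cast this
      _ = 4 + 12 * Real.pi * (W1 * W2 * W3) /
          max (max (((|h1| : ℤ) : ℝ) * W1) (((|h2| : ℤ) : ℝ) * W2)) (((|h3| : ℤ) : ℝ) * W3) := by
          rw [hA, hB, hC]
end

section
/- There is an absolute constant C > 0 with the following property. Let z, N ≥ 1 be reals, let S be a subset of the integers in [1, N], and suppose that for every prime p ≤ z there is an integer σ(p) with 0 ≤ σ(p) < p such that the image of S in ℤ/pℤ has p − σ(p) elements. Then #S ≤ C·(N + z²)/G(z), where G(z) = Σ_{n ≤ z} |μ(n)|·∏_{p | n} σ(p)/(p − σ(p)), the sum over positive integers n ≤ z and the product over primes p dividing n. -/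
set_option maxHeartbeats 1000000

open ArithmeticFunction

section MLSAux

open MeasureTheory Finset Complex
open scoped Real ComplexConjugate

noncomputable section

/-- The exponential `e(nx) = exp(2πinx)`. -/
def ee (n : ℤ) (x : ℝ) : ℂ := Complex.exp (2 * Real.pi * Complex.I * n * x)


lemma ee_def (n : ℤ) (x : ℝ) : ee n x = Complex.exp ((2 * Real.pi * Complex.I * n) * x) := rfl

lemma ee_add (n : ℤ) (x y : ℝ) : ee n (x + y) = ee n x * ee n y := by
  rw [ee, ee, ee, ← Complex.exp_add]
  congr 1
  push_cast
  ring

lemma ee_int (n k : ℤ) : ee n (k : ℝ) = 1 := by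
  rw [ee]
  have : 2 * (Real.pi:ℂ) * Complex.I * n * (k:ℝ) = (n * k : ℤ) * (2 * Real.pi * Complex.I) := by
    push_cast; ring
  rw [this, Complex.exp_int_mul_two_pi_mul_I]

lemma ee_conj (n : ℤ) (x : ℝ) : conj (ee n x) = ee (-n) x := by
  rw [ee, ee, ← Complex.exp_conj]
  congr 1
  simp [Complex.ext_iff]

lemma ee_mul (m n : ℤ) (x : ℝ) : ee m x * ee n x = ee (m + n) x := by
  rw [ee, ee, ee, ← Complex.exp_add]
  congr 1
  push_cast
  ring

lemma ee_zero (x : ℝ) : ee 0 x = 1 := by simp [ee]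

lemma continuous_ee (n : ℤ) : Continuous (ee n) := by
  unfold ee; fun_prop

lemma hasDerivAt_ee (n : ℤ) (x : ℝ) :
    HasDerivAt (ee n) ((2 * Real.pi * Complex.I * n) * ee n x) x := by
  have h1 : HasDerivAt (fun x : ℝ => ((2 * Real.pi * Complex.I * n) * x : ℂ))
      (2 * Real.pi * Complex.I * n) x := by
    simpa using (Complex.ofRealCLM.hasDerivAt (x := x)).const_mul (2 * Real.pi * Complex.I * n)
  have h2 := h1.cexp
  have : ee n = fun x : ℝ => Complex.exp ((2 * Real.pi * Complex.I * n) * x) := rfl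
  rw [this]
  convert h2 using 1
  ring


variable (S : Finset ℤ)
def TT (x : ℝ) : ℂ := ∑ n ∈ S, ee n x
def TT' (x : ℝ) : ℂ := ∑ n ∈ S, (2 * Real.pi * Complex.I * n) * ee n x
def ff (x : ℝ) : ℝ := ‖TT S x‖ ^ 2
def ff' (x : ℝ) : ℝ := 2 * ((TT S x).re * (TT' S x).re + (TT S x).im * (TT' S x).im)



lemma continuous_TT : Continuous (TT S) := by
  exact continuous_finset_sum _ fun n _ => continuous_ee n

lemma continuous_TT' : Continuous (TT' S) := by
  exact continuous_finset_sum _ fun n _ => continuous_const.mul (continuous_ee n)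

lemma continuous_ff : Continuous (ff S) := by
  unfold ff
  exact ((continuous_TT S).norm.pow 2)

lemma continuous_ff' : Continuous (ff' S) := by
  unfold ff'
  have h := continuous_TT S
  have h' := continuous_TT' S
  continuity

lemma TT_int_add (x : ℝ) (k : ℤ) : TT S (x + k) = TT S x := by
  unfold TT
  refine Finset.sum_congr rfl fun n _ => ?_
  rw [ee_add, ee_int, mul_one]

lemma TT'_int_add (x : ℝ) (k : ℤ) : TT' S (x + k) = TT' S x := by
  unfold TT'
  refine Finset.sum_congr rfl fun n _ => ?_
  rw [ee_add, ee_int, mul_one]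

lemma ff_per : Function.Periodic (ff S) 1 := by
  intro x
  unfold ff
  rw [show x + (1:ℝ) = x + ((1:ℤ):ℝ) by norm_num, TT_int_add]

lemma ff'_per : Function.Periodic (ff' S) 1 := by
  intro x
  have h1 : x + (1:ℝ) = x + ((1:ℤ):ℝ) := by norm_num
  unfold ff'
  rw [h1, TT_int_add, TT'_int_add]

lemma norm_sq_eq (z : ℂ) : ‖z‖ ^ 2 = z.re ^ 2 + z.im ^ 2 := by
  simp [Complex.sq_norm, Complex.normSq_apply]
  ring
 
lemma hasDerivAt_ff (x : ℝ) : HasDerivAt (ff S) (ff' S x) x := by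
  have hT : HasDerivAt (TT S) (TT' S x) x := HasDerivAt.fun_sum fun n _ => hasDerivAt_ee n x
  have hre : HasDerivAt (fun y => (TT S y).re) ((TT' S x).re) x :=
    (Complex.reCLM.hasFDerivAt.comp_hasDerivAt x hT)
  have him : HasDerivAt (fun y => (TT S y).im) ((TT' S x).im) x :=
    (Complex.imCLM.hasFDerivAt.comp_hasDerivAt x hT)
  have h : HasDerivAt (fun y => (TT S y).re ^ 2 + (TT S y).im ^ 2)
      (2 * (TT S x).re ^ 1 * (TT' S x).re + 2 * (TT S x).im ^ 1 * (TT' S x).im) x :=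
    (hre.pow 2).add (him.pow 2)
  have he : ff S = fun y => (TT S y).re ^ 2 + (TT S y).im ^ 2 := by
    funext y; exact norm_sq_eq _
  rw [he]
  convert h using 1
  unfold ff'
  ring

lemma ff'_bound (x : ℝ) : |ff' S x| ≤ 2 * ‖TT S x‖ * ‖TT' S x‖ := by
  have h1 := norm_sq_eq (TT S x)
  have h2 := norm_sq_eq (TT' S x)
  have hn1 : (0:ℝ) ≤ ‖TT S x‖ := norm_nonneg _
  have hn2 : (0:ℝ) ≤ ‖TT' S x‖ := norm_nonneg _
  unfold ff'
  set a := (TT S x).re; set b := (TT S x).im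
  set c := (TT' S x).re; set d := (TT' S x).im
  rcases abs_cases (2 * (a * c + b * d)) with ⟨he, _⟩ | ⟨he, _⟩ <;> rw [he] <;>
    nlinarith [sq_nonneg (a*d - b*c), sq_nonneg (a*d + b*c), sq_nonneg (‖TT S x‖ - ‖TT' S x‖),
      mul_nonneg hn1 hn2]

lemma two_pi_I_ne : (2 * (Real.pi:ℂ) * Complex.I) ≠ 0 := by
  simp [Real.pi_ne_zero, Complex.I_ne_zero, Complex.ext_iff]

lemma integral_ee (k : ℤ) : (∫ x in (0:ℝ)..1, ee k x) = if k = 0 then 1 else 0 := by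
  by_cases hk : k = 0
  · simp [hk, ee]
  · have hc : (2 * (Real.pi:ℂ) * Complex.I * k) ≠ 0 :=
      mul_ne_zero two_pi_I_ne (by exact_mod_cast hk)
    have h := integral_exp_mul_complex (a := 0) (b := 1) hc
    have he : ∀ x : ℝ, ee k x = Complex.exp ((2 * Real.pi * Complex.I * k) * x) := fun x => ee_def k x
    rw [if_neg hk]
    calc (∫ x in (0:ℝ)..1, ee k x) = ∫ x in (0:ℝ)..1, Complex.exp ((2 * Real.pi * Complex.I * k) * x) := by
          simp_rw [he]
      _ = (Complex.exp (2 * Real.pi * Complex.I * k * (1:ℝ)) - Complex.exp (2 * Real.pi * Complex.I * k * (0:ℝ))) / (2 * Real.pi * Complex.I * k) := h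
      _ = 0 := by
          have h1 : (2 * (Real.pi:ℂ) * Complex.I * k * ((1:ℝ):ℂ)) = (k:ℂ) * (2 * Real.pi * Complex.I) := by push_cast; ring
          rw [h1, Complex.exp_int_mul_two_pi_mul_I]
          simp

lemma parseval (S : Finset ℤ) (w : ℤ → ℂ) :
    (∫ x in (0:ℝ)..1, ‖∑ n ∈ S, w n * ee n x‖ ^ 2) = ∑ n ∈ S, ‖w n‖ ^ 2 := by
  set U : ℝ → ℂ := fun x => ∑ n ∈ S, w n * ee n x with hU
  have hUc : Continuous U := continuous_finset_sum _ fun n _ => continuous_const.mul (continuous_ee n)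
  have hexp : ∀ x, U x * conj (U x) = ∑ m ∈ S, ∑ n ∈ S, (w m * conj (w n)) * ee (m - n) x := by
    intro x
    rw [hU]
    simp only [map_sum, map_mul, ee_conj, Finset.sum_mul_sum]
    refine Finset.sum_congr rfl fun m _ => Finset.sum_congr rfl fun n _ => ?_
    rw [mul_mul_mul_comm, ee_mul]
    ring_nf
  have hint : (∫ x in (0:ℝ)..1, U x * conj (U x))
      = ∑ m ∈ S, ∑ n ∈ S, (w m * conj (w n)) * (if m - n = 0 then 1 else 0) := by
    simp_rw [hexp]
    rw [intervalIntegral.integral_finset_sum]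
    · refine Finset.sum_congr rfl fun m _ => ?_
      rw [intervalIntegral.integral_finset_sum]
      · exact Finset.sum_congr rfl fun n _ => by
          rw [intervalIntegral.integral_const_mul, integral_ee]
      · exact fun n _ => (continuous_const.mul (continuous_ee _)).intervalIntegrable _ _
    · intro m _
      exact (continuous_finset_sum _ fun n _ =>
        continuous_const.mul (continuous_ee _) : Continuous _).intervalIntegrable _ _
  have hsum : (∑ m ∈ S, ∑ n ∈ S, (w m * conj (w n)) * (if m - n = 0 then 1 else 0))
      = ∑ n ∈ S, (↑(Complex.normSq (w n)) : ℂ) := by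
    refine Finset.sum_congr rfl fun m hm => ?_
    have : ∀ n ∈ S, (w m * conj (w n)) * (if m - n = 0 then 1 else 0)
        = if n = m then w m * conj (w m) else 0 := by
      intro n _
      by_cases h : n = m
      · simp [h]
      · have : ¬ (m - n = 0) := fun hc => h (by omega)
        simp [h, this]
    rw [Finset.sum_congr rfl this, Finset.sum_ite_eq' S m (fun _ => w m * conj (w m)), if_pos hm,
      Complex.mul_conj]
  have hre : ∀ x, ‖U x‖ ^ 2 = Complex.reCLM (U x * conj (U x)) := by
    intro x
    rw [Complex.mul_conj]
    simp [Complex.normSq_eq_norm_sq, ← Complex.ofReal_pow]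
  calc (∫ x in (0:ℝ)..1, ‖U x‖ ^ 2) = ∫ x in (0:ℝ)..1, Complex.reCLM (U x * conj (U x)) := by
        simp_rw [hre]
    _ = Complex.reCLM (∫ x in (0:ℝ)..1, U x * conj (U x)) := by
        exact Complex.reCLM.intervalIntegral_comp_comm
          ((hUc.mul (Complex.continuous_conj.comp hUc)).intervalIntegrable _ _)
    _ = ∑ n ∈ S, ‖w n‖ ^ 2 := by
        rw [hint, hsum]
        simp [Complex.normSq_eq_norm_sq, ← Complex.ofReal_pow]

lemma per3 (g : ℝ → ℝ) (hper : Function.Periodic g 1) (hc : Continuous g) :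
    (∫ x in (-1:ℝ)..2, g x) = 3 * ∫ x in (0:ℝ)..1, g x := by
  have i1 : (∫ x in (-1:ℝ)..0, g x) = ∫ x in (0:ℝ)..1, g x := by
    have := hper.intervalIntegral_add_eq (-1) 0
    norm_num at this
    convert this using 2 <;> norm_num
  have i2 : (∫ x in (1:ℝ)..2, g x) = ∫ x in (0:ℝ)..1, g x := by
    have := hper.intervalIntegral_add_eq 1 0
    norm_num at this
    convert this using 2 <;> norm_num
  have a1 : (∫ x in (-1:ℝ)..0, g x) + (∫ x in (0:ℝ)..1, g x) = ∫ x in (-1:ℝ)..1, g x :=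
    intervalIntegral.integral_add_adjacent_intervals (hc.intervalIntegrable _ _) (hc.intervalIntegrable _ _)
  have a2 : (∫ x in (-1:ℝ)..1, g x) + (∫ x in (1:ℝ)..2, g x) = ∫ x in (-1:ℝ)..2, g x :=
    intervalIntegral.integral_add_adjacent_intervals (hc.intervalIntegrable _ _) (hc.intervalIntegrable _ _)
  rw [← a2, ← a1, i1, i2]
  ring

lemma gallagher_pt (g g' : ℝ → ℝ) (hd : ∀ y, HasDerivAt g (g' y) y)
    (hc : Continuous g) (hc' : Continuous g') {u v x : ℝ} (hu : u ≤ x) (hx : x ≤ v) :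
    (v - u) * g x ≤ (∫ t in u..v, g t) + (v - u) * ∫ t in u..v, |g' t| := by
  have huv : u ≤ v := le_trans hu hx
  set B := ∫ t in u..v, |g' t| with hB
  have habs' : Continuous fun t => |g' t| := hc'.abs
  have key : ∀ t ∈ Set.Icc u v, g x ≤ g t + B := by
    intro t ht
    have hftc : (∫ s in t..x, g' s) = g x - g t :=
      intervalIntegral.integral_eq_sub_of_hasDerivAt (fun s _ => hd s) (hc'.intervalIntegrable _ _)
    have habs : |∫ s in t..x, g' s| ≤ B := by
      rcases le_total t x with h | h
      · calc |∫ s in t..x, g' s| ≤ ∫ s in t..x, |g' s| := by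
              simpa using intervalIntegral.norm_integral_le_integral_norm (f := g') h
          _ ≤ B := intervalIntegral.integral_mono_interval ht.1 h hx
              (Filter.Eventually.of_forall fun s => abs_nonneg _) (habs'.intervalIntegrable _ _)
      · calc |∫ s in t..x, g' s| = |∫ s in x..t, g' s| := by
              rw [intervalIntegral.integral_symm]; rw [abs_neg]
          _ ≤ ∫ s in x..t, |g' s| := by
              simpa using intervalIntegral.norm_integral_le_integral_norm (f := g') h
          _ ≤ B := intervalIntegral.integral_mono_interval hu h ht.2
              (Filter.Eventually.of_forall fun s => abs_nonneg _) (habs'.intervalIntegrable _ _)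
    have := abs_le.mp habs
    linarith [this.2, hftc ▸ this.2]
  have hmono : (∫ t in u..v, (fun _ => g x) t) ≤ ∫ t in u..v, (g t + B) :=
    intervalIntegral.integral_mono_on huv (intervalIntegrable_const)
      ((hc.intervalIntegrable _ _).add (intervalIntegrable_const)) key
  rw [intervalIntegral.integral_const] at hmono
  rw [intervalIntegral.integral_add (hc.intervalIntegrable _ _) intervalIntegrable_const,
    intervalIntegral.integral_const] at hmono
  simp only [smul_eq_mul] at hmono
  linarith

lemma sum_int_le {ι : Type*} [DecidableEq ι] (g : ℝ → ℝ) (hc : Continuous g) (hpos : ∀ x, 0 ≤ g x)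
    (P : Finset ι) (u v : ι → ℝ) (huv : ∀ i ∈ P, u i ≤ v i)
    (hd : ∀ i ∈ P, ∀ j ∈ P, i ≠ j → Disjoint (Set.Ioc (u i) (v i)) (Set.Ioc (u j) (v j)))
    (hsub : ∀ i ∈ P, Set.Ioc (u i) (v i) ⊆ Set.Ioc (-1:ℝ) 2) :
    (∑ i ∈ P, ∫ t in (u i)..(v i), g t) ≤ ∫ t in (-1:ℝ)..2, g t := by
  have h1 : ∀ i ∈ P, (∫ t in (u i)..(v i), g t) = ∫ t in Set.Ioc (u i) (v i), g t :=
    fun i hi => intervalIntegral.integral_of_le (huv i hi)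
  rw [Finset.sum_congr rfl h1]
  rw [← MeasureTheory.integral_biUnion_finset P (fun i _ => measurableSet_Ioc)
    (fun i hi j hj hij => hd i hi j hj hij) (fun i _ => hc.integrableOn_Ioc)]
  rw [intervalIntegral.integral_of_le (by norm_num : (-1:ℝ) ≤ 2)]
  exact MeasureTheory.setIntegral_mono_set (hc.integrableOn_Ioc)
    (Filter.Eventually.of_forall hpos)
    (HasSubset.Subset.eventuallyLE (Set.iUnion₂_subset hsub))

def Aq (q : ℕ) : Finset ℕ := (Finset.Icc 1 q).filter (fun a => Nat.gcd a q = 1)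

lemma farey_sep {Q q a q' a' : ℕ} (hq : q ∈ Finset.Icc 1 Q) (ha : a ∈ Aq q)
    (hq' : q' ∈ Finset.Icc 1 Q) (ha' : a' ∈ Aq q') (hne : (q, a) ≠ (q', a')) :
    1 / (Q:ℝ)^2 ≤ |(a:ℝ)/q - (a':ℝ)/q'| := by
  simp only [Finset.mem_Icc, Aq, Finset.mem_filter] at hq ha hq' ha'
  have hq0 : 0 < q := hq.1
  have hq'0 : 0 < q' := hq'.1
  have hQ0 : 0 < Q := lt_of_lt_of_le hq0 hq.2
  have hnum : a * q' ≠ a' * q := by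
    intro h
    apply hne
    have h1 : q ∣ a * q' := ⟨a', by rw [h, mul_comm]⟩
    have h2 : q ∣ q' := (Nat.Coprime.dvd_of_dvd_mul_left (Nat.coprime_comm.mp ha.2) h1)
    have h1' : q' ∣ a' * q := ⟨a, by rw [← h, mul_comm]⟩
    have h2' : q' ∣ q := (Nat.Coprime.dvd_of_dvd_mul_left (Nat.coprime_comm.mp ha'.2) h1')
    have hqq : q = q' := Nat.dvd_antisymm h2 h2'
    subst hqq
    have : a = a' := by
      have := Nat.eq_of_mul_eq_mul_right hq0 h
      omega
    simp [this]
  have hD : ((a:ℤ) * q' - a' * q) ≠ 0 := by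
    intro h
    apply hnum
    have : (a:ℤ) * q' = a' * q := by linarith
    exact_mod_cast this
  have h1 : (1:ℤ) ≤ |(a:ℤ) * q' - a' * q| := Int.one_le_abs hD
  have hnum1 : (1:ℝ) ≤ |(a:ℝ) * q' - a' * q| := by
    have : ((1:ℤ):ℝ) ≤ (|(a:ℤ) * q' - a' * q| : ℤ) := by exact_mod_cast h1
    rw [Int.cast_abs] at this
    push_cast at this
    simpa using this
  have hcast : (a:ℝ)/q - (a':ℝ)/q' = ((a:ℝ) * q' - a' * q) / ((q:ℝ) * q') := by
    field_simp
  rw [hcast, abs_div, abs_of_pos (show (0:ℝ) < (q:ℝ) * q' by positivity)]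
  rw [div_le_div_iff₀ (by positivity) (by positivity)]
  have hqQ : (q:ℝ) * q' ≤ (Q:ℝ)^2 := by
    have h1 : (q:ℝ) ≤ Q := by exact_mod_cast hq.2
    have h2 : (q':ℝ) ≤ Q := by exact_mod_cast hq'.2
    have h3 : (0:ℝ) ≤ q := by positivity
    nlinarith
  nlinarith [hnum1, hqQ, sq_nonneg ((Q:ℝ))]

lemma stepA (S : Finset ℤ) (N z : ℝ) (hN : 1 ≤ N) (hz : 1 ≤ z)
    (hS : ∀ n ∈ S, 1 ≤ n ∧ (n : ℝ) ≤ N) :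
    (∑ q ∈ Finset.Icc 1 ⌊z⌋₊, ∑ a ∈ Aq q, ff S ((a:ℝ)/q))
      ≤ (6 * ((⌊z⌋₊:ℝ))^2 + 12 * Real.pi * N) * S.card := by
  have hπ := Real.pi_gt_three
  set Q := ⌊z⌋₊ with hQdef
  have hQ1 : 1 ≤ Q := Nat.le_floor (by exact_mod_cast hz)
  have hQR : (1:ℝ) ≤ (Q:ℝ) := by exact_mod_cast hQ1
  set ρ : ℝ := 1/(4*(Q:ℝ)^2) with hρ
  have hρ0 : 0 < ρ := by positivity
  have hρ4 : ρ ≤ 1/4 := by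
    rw [hρ]
    have h4 : (4:ℝ) ≤ 4*(Q:ℝ)^2 := by nlinarith
    exact one_div_le_one_div_of_le (by norm_num) h4
  have hone : (2*(Q:ℝ)^2) * (2*ρ) = 1 := by
    rw [hρ]
    field_simp
    ring
  -- Parseval values
  have hZ : (∫ x in (0:ℝ)..1, ff S x) = S.card := by
    have hp := parseval S (fun _ => (1:ℂ))
    simp only [one_mul, norm_one, one_pow, Finset.sum_const, smul_eq_mul, mul_one] at hp
    have he : Set.EqOn (ff S) (fun x => ‖∑ n ∈ S, ee n x‖^2) (Set.uIcc 0 1) := by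
      intro x _; simp [ff, TT]
    rw [intervalIntegral.integral_congr he, hp]
    simp
  have hT' : (∫ x in (0:ℝ)..1, ‖TT' S x‖^2) ≤ (2*Real.pi*N)^2 * S.card := by
    have hp := parseval S (fun n : ℤ => (2*(Real.pi:ℂ)*Complex.I*n))
    have he : Set.EqOn (fun x => ‖TT' S x‖^2)
        (fun x => ‖∑ n ∈ S, (2*(Real.pi:ℂ)*Complex.I*n) * ee n x‖^2) (Set.uIcc 0 1) := by
      intro x _; simp [TT']
    rw [intervalIntegral.integral_congr he, hp]
    have hb : ∀ n ∈ S, ‖(2*(Real.pi:ℂ)*Complex.I*(n:ℂ))‖^2 ≤ (2*Real.pi*N)^2 := by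
      intro n hn
      obtain ⟨hn1, hn2⟩ := hS n hn
      have h1 : ‖(2*(Real.pi:ℂ)*Complex.I*(n:ℂ))‖ = 2*Real.pi*|(n:ℝ)| := by
        simp [map_mul, Complex.norm_I, Complex.norm_intCast,
          Complex.norm_real, Complex.norm_two, abs_of_pos Real.pi_pos]
      rw [h1]
      have h2 : |(n:ℝ)| ≤ N := by
        rw [abs_of_pos (by exact_mod_cast lt_of_lt_of_le zero_lt_one (by exact_mod_cast hn1))]
        exact hn2
      have h3 : 2*Real.pi*|(n:ℝ)| ≤ 2*Real.pi*N := by nlinarith [Real.pi_pos]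
      exact pow_le_pow_left₀ (by positivity) h3 2
    calc (∑ n ∈ S, ‖(2*(Real.pi:ℂ)*Complex.I*(n:ℂ))‖^2) ≤ ∑ _n ∈ S, (2*Real.pi*N)^2 :=
          Finset.sum_le_sum hb
      _ = (2*Real.pi*N)^2 * S.card := by rw [Finset.sum_const, nsmul_eq_mul]; ring
  have hlam0 : (0:ℝ) < 2*Real.pi*N := by positivity
  have habs : (∫ x in (0:ℝ)..1, |ff' S x|) ≤ 4*Real.pi*N * S.card := by
    have hptw : ∀ t ∈ Set.Icc (0:ℝ) 1, |ff' S t| ≤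
        (2*Real.pi*N) * ff S t + (2*Real.pi*N)⁻¹ * ‖TT' S t‖^2 := by
      intro t _
      have hb := ff'_bound S t
      set a := ‖TT S t‖ with hadef
      set b := ‖TT' S t‖ with hbdef
      have h2 : 2*a*b ≤ (2*Real.pi*N)*a^2 + (2*Real.pi*N)⁻¹*b^2 := by
        rw [← sub_nonneg]
        have hid : (2*Real.pi*N)*a^2 + (2*Real.pi*N)⁻¹*b^2 - 2*a*b
            = ((2*Real.pi*N)*a - b)^2/(2*Real.pi*N) := by
          field_simp
          ring
        rw [hid]
        positivity
      have hffa : ff S t = a^2 := rfl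
      calc |ff' S t| ≤ 2*a*b := by linarith [hb]
        _ ≤ (2*Real.pi*N)*a^2 + (2*Real.pi*N)⁻¹*b^2 := h2
        _ = (2*Real.pi*N) * ff S t + (2*Real.pi*N)⁻¹ * ‖TT' S t‖^2 := by rw [hffa]
    have hcT2 : Continuous (fun x => ‖TT' S x‖^2) := ((continuous_TT' S).norm.pow 2)
    have hint : (∫ x in (0:ℝ)..1, |ff' S x|) ≤
        ∫ x in (0:ℝ)..1, ((2*Real.pi*N) * ff S x + (2*Real.pi*N)⁻¹ * ‖TT' S x‖^2) := by
      refine intervalIntegral.integral_mono_on (by norm_num) ((continuous_ff' S).abs.intervalIntegrable _ _) ?_ hptw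
      exact ((continuous_const.mul (continuous_ff S)).add (continuous_const.mul hcT2)).intervalIntegrable _ _
    rw [intervalIntegral.integral_add (f := fun x => (2*Real.pi*N) * ff S x)
      (g := fun x => (2*Real.pi*N)⁻¹ * ‖TT' S x‖^2) ((continuous_const.mul (continuous_ff S)).intervalIntegrable _ _)
      ((continuous_const.mul hcT2).intervalIntegrable _ _),
      intervalIntegral.integral_const_mul, intervalIntegral.integral_const_mul, hZ] at hint
    have h3 : (2*Real.pi*N)⁻¹ * (∫ x in (0:ℝ)..1, ‖TT' S x‖^2)
        ≤ (2*Real.pi*N)⁻¹ * ((2*Real.pi*N)^2 * S.card) :=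
      mul_le_mul_of_nonneg_left hT' (by positivity)
    have h4 : (2*Real.pi*N)⁻¹ * ((2*Real.pi*N)^2 * S.card) = 2*Real.pi*N*S.card := by
      field_simp
    calc (∫ x in (0:ℝ)..1, |ff' S x|)
        ≤ 2*Real.pi*N * S.card + (2*Real.pi*N)⁻¹ * ∫ x in (0:ℝ)..1, ‖TT' S x‖^2 := hint
      _ ≤ 2*Real.pi*N * S.card + 2*Real.pi*N*S.card := by linarith [h3, h4 ▸ h3]
      _ = 4*Real.pi*N * S.card := by ring
  -- point set
  set P := (Finset.Icc 1 Q).sigma (fun q => Aq q) with hP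
  set xx : (_ : ℕ) × ℕ → ℝ := fun i => (i.2 : ℝ)/(i.1 : ℝ) with hxx
  have hmem : ∀ i ∈ P, 0 < xx i ∧ xx i ≤ 1 := by
    intro i hi
    obtain ⟨h1, h2⟩ := Finset.mem_sigma.mp hi
    simp only [Aq, Finset.mem_filter, Finset.mem_Icc] at h1 h2
    constructor
    · apply div_pos <;> [exact_mod_cast h2.1.1; exact_mod_cast lt_of_lt_of_le h1.1 le_rfl]
    · rw [div_le_one (by exact_mod_cast h1.1)]
      exact_mod_cast h2.1.2
  have hsum_eq : (∑ q ∈ Finset.Icc 1 Q, ∑ a ∈ Aq q, ff S ((a:ℝ)/q)) = ∑ i ∈ P, ff S (xx i) := by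
    rw [hP, Finset.sum_sigma]
  have hgal : ∀ i ∈ P, ff S (xx i) ≤
      (2*(Q:ℝ)^2) * (∫ t in (xx i - ρ)..(xx i + ρ), ff S t)
        + ∫ t in (xx i - ρ)..(xx i + ρ), |ff' S t| := by
    intro i _
    have hg := gallagher_pt (ff S) (ff' S) (hasDerivAt_ff S) (continuous_ff S) (continuous_ff' S)
      (u := xx i - ρ) (v := xx i + ρ) (x := xx i) (by linarith) (by linarith)
    have hvu : (xx i + ρ) - (xx i - ρ) = 2*ρ := by ring
    rw [hvu] at hg
    have hmul := mul_le_mul_of_nonneg_left hg (show (0:ℝ) ≤ 2*(Q:ℝ)^2 by positivity)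
    calc ff S (xx i) = (2*(Q:ℝ)^2) * (2*ρ * ff S (xx i)) := by
          rw [← mul_assoc, hone, one_mul]
      _ ≤ (2*(Q:ℝ)^2) * ((∫ t in (xx i - ρ)..(xx i + ρ), ff S t)
            + 2*ρ * ∫ t in (xx i - ρ)..(xx i + ρ), |ff' S t|) := hmul
      _ = (2*(Q:ℝ)^2) * (∫ t in (xx i - ρ)..(xx i + ρ), ff S t)
            + ((2*(Q:ℝ)^2) * (2*ρ)) * ∫ t in (xx i - ρ)..(xx i + ρ), |ff' S t| := by ring
      _ = (2*(Q:ℝ)^2) * (∫ t in (xx i - ρ)..(xx i + ρ), ff S t)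
            + ∫ t in (xx i - ρ)..(xx i + ρ), |ff' S t| := by rw [hone, one_mul]
  -- disjointness
  have hdisj : ∀ i ∈ P, ∀ j ∈ P, i ≠ j →
      Disjoint (Set.Ioc (xx i - ρ) (xx i + ρ)) (Set.Ioc (xx j - ρ) (xx j + ρ)) := by
    intro i hi j hj hij
    obtain ⟨hi1, hi2⟩ := Finset.mem_sigma.mp hi
    obtain ⟨hj1, hj2⟩ := Finset.mem_sigma.mp hj
    have hne : (i.1, i.2) ≠ (j.1, j.2) := by
      intro h
      apply hij
      obtain ⟨i1, i2⟩ := i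
      obtain ⟨j1, j2⟩ := j
      simp only [Prod.mk.injEq] at h
      simp [h.1, h.2]
    have hsep := farey_sep hi1 hi2 hj1 hj2 hne
    have h4ρ : 4*ρ ≤ |xx i - xx j| := by
      rw [hρ]
      calc 4 * (1/(4*(Q:ℝ)^2)) = 1/(Q:ℝ)^2 := by field_simp
        _ ≤ |xx i - xx j| := hsep
    rw [Set.Ioc_disjoint_Ioc]
    rcases le_total (xx i) (xx j) with h | h
    · have : xx i + ρ ≤ xx j - ρ := by
        rw [_root_.abs_of_nonpos (by linarith)] at h4ρ
        linarith
      exact le_trans inf_le_left (le_trans this le_sup_right)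
    · have : xx j + ρ ≤ xx i - ρ := by
        rw [_root_.abs_of_nonneg (by linarith)] at h4ρ
        linarith
      exact le_trans inf_le_right (le_trans this le_sup_left)
  have hsubs : ∀ i ∈ P, Set.Ioc (xx i - ρ) (xx i + ρ) ⊆ Set.Ioc (-1:ℝ) 2 := by
    intro i hi
    obtain ⟨h1, h2⟩ := hmem i hi
    exact Set.Ioc_subset_Ioc (by linarith) (by linarith)
  have huvle : ∀ i ∈ P, xx i - ρ ≤ xx i + ρ := fun i _ => by linarith
  have hffnn : ∀ x, 0 ≤ ff S x := fun x => by
    show (0:ℝ) ≤ ‖TT S x‖^2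
    positivity
  have hsum1 := sum_int_le (ff S) (continuous_ff S) hffnn P
    (fun i => xx i - ρ) (fun i => xx i + ρ) huvle hdisj hsubs
  have hsum2 := sum_int_le (fun t => |ff' S t|) (continuous_ff' S).abs (fun x => abs_nonneg _) P
    (fun i => xx i - ρ) (fun i => xx i + ρ) huvle hdisj hsubs
  have hper1 : (∫ t in (-1:ℝ)..2, ff S t) = 3 * ∫ t in (0:ℝ)..1, ff S t :=
    per3 (ff S) (ff_per S) (continuous_ff S)
  have hper2 : (∫ t in (-1:ℝ)..2, |ff' S t|) = 3 * ∫ t in (0:ℝ)..1, |ff' S t| :=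
    per3 (fun t => |ff' S t|) (fun x => by
      show |ff' S (x+1)| = |ff' S x|
      rw [ff'_per S x]) (continuous_ff' S).abs
  calc (∑ q ∈ Finset.Icc 1 Q, ∑ a ∈ Aq q, ff S ((a:ℝ)/q)) = ∑ i ∈ P, ff S (xx i) := hsum_eq
    _ ≤ ∑ i ∈ P, ((2*(Q:ℝ)^2) * (∫ t in (xx i - ρ)..(xx i + ρ), ff S t)
          + ∫ t in (xx i - ρ)..(xx i + ρ), |ff' S t|) := Finset.sum_le_sum hgal
    _ = (2*(Q:ℝ)^2) * (∑ i ∈ P, ∫ t in (xx i - ρ)..(xx i + ρ), ff S t)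
          + ∑ i ∈ P, ∫ t in (xx i - ρ)..(xx i + ρ), |ff' S t| := by
        rw [Finset.sum_add_distrib, Finset.mul_sum]
    _ ≤ (2*(Q:ℝ)^2) * (∫ t in (-1:ℝ)..2, ff S t) + ∫ t in (-1:ℝ)..2, |ff' S t| := by
        have := mul_le_mul_of_nonneg_left hsum1 (show (0:ℝ) ≤ 2*(Q:ℝ)^2 by positivity)
        linarith [hsum2]
    _ = 6*(Q:ℝ)^2 * S.card + 3 * ∫ t in (0:ℝ)..1, |ff' S t| := by
        rw [hper1, hper2, hZ]
        ring
    _ ≤ 6*(Q:ℝ)^2 * S.card + 3 * (4*Real.pi*N * S.card) := by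
        have := mul_le_mul_of_nonneg_left habs (show (0:ℝ) ≤ 3 by norm_num)
        linarith
    _ = (6 * ((Q:ℝ))^2 + 12 * Real.pi * N) * S.card := by ring

def TTh (S : Finset ℤ) (p : ℕ) (h : ZMod p) (x : ℝ) : ℂ :=
  ∑ n ∈ S.filter (fun n : ℤ => (n : ZMod p) = h), ee n x

lemma csum {p : ℕ} (hp : p.Prime) (k : ℤ) :
    (∑ b ∈ Finset.range p, ee k ((b:ℝ)/p)) = if (p:ℤ) ∣ k then (p:ℂ) else 0 := by
  have hp0 : (p:ℂ) ≠ 0 := by exact_mod_cast hp.pos.ne'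
  have hterm : ∀ b : ℕ, ee k ((b:ℝ)/p) = (Complex.exp (2*Real.pi*Complex.I*k/p))^b := by
    intro b
    rw [ee, ← Complex.exp_nat_mul]
    congr 1
    push_cast
    field_simp
  simp_rw [hterm]
  by_cases hd : (p:ℤ) ∣ k
  · obtain ⟨j, hj⟩ := hd
    have hζ : Complex.exp (2*Real.pi*Complex.I*k/p) = 1 := by
      have harg : 2*(Real.pi:ℂ)*Complex.I*(k:ℂ)/(p:ℂ) = (j:ℂ)*(2*Real.pi*Complex.I) := by
        rw [hj]
        push_cast
        field_simp
      rw [harg, Complex.exp_int_mul_two_pi_mul_I]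
    rw [if_pos ⟨j, hj⟩]
    simp [hζ, Finset.card_range]
  · have hζ1 : Complex.exp (2*Real.pi*Complex.I*k/p) ≠ 1 := by
      intro h1
      rw [Complex.exp_eq_one_iff] at h1
      obtain ⟨m, hm⟩ := h1
      apply hd
      rw [div_eq_iff hp0] at hm
      have hk : (k:ℂ) = (m:ℂ)*(p:ℂ) := by
        apply mul_left_cancel₀ two_pi_I_ne
        linear_combination hm
      have : k = m * p := by exact_mod_cast hk
      exact ⟨m, by rw [this, mul_comm]⟩
    rw [geom_sum_eq hζ1]
    have hpow : Complex.exp (2*Real.pi*Complex.I*k/p)^p = 1 := by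
      rw [← Complex.exp_nat_mul]
      have harg : (p:ℂ)*(2*Real.pi*Complex.I*(k:ℂ)/(p:ℂ)) = (k:ℂ)*(2*Real.pi*Complex.I) := by
        field_simp
      rw [harg]
      exact_mod_cast Complex.exp_int_mul_two_pi_mul_I k
    rw [hpow, if_neg hd]
    simp

lemma norm_sq_re (w : ℂ) : ‖w‖^2 = (w * conj w).re := by
  rw [Complex.mul_conj]
  simp [Complex.normSq_eq_norm_sq, ← Complex.ofReal_pow]

lemma sumB (S : Finset ℤ) {p : ℕ} [NeZero p] (hp : p.Prime) (x : ℝ) :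
    (∑ b ∈ Finset.range p, ff S (x + (b:ℝ)/p)) = p * ∑ h : ZMod p, ‖TTh S p h x‖^2 := by
  set K : ℤ → ℤ → ℂ := fun m n => ee m x * conj (ee n x) with hK
  have hL : (∑ b ∈ Finset.range p, (TT S (x + (b:ℝ)/p) * conj (TT S (x + (b:ℝ)/p))))
      = (p:ℂ) * ∑ m ∈ S, ∑ n ∈ S, (if ((n : ZMod p) = (m : ZMod p)) then K m n else 0) := by
    have hb : ∀ b ∈ Finset.range p, TT S (x + (b:ℝ)/p) * conj (TT S (x + (b:ℝ)/p))
        = ∑ m ∈ S, ∑ n ∈ S, K m n * ee (m - n) ((b:ℝ)/p) := by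
      intro b _
      unfold TT
      simp_rw [ee_add]
      rw [map_sum, Finset.sum_mul_sum]
      refine Finset.sum_congr rfl fun m _ => Finset.sum_congr rfl fun n _ => ?_
      simp only [hK, map_mul, ee_conj]
      rw [show m - n = m + (-n) from by ring, ← ee_mul]
      ring
    rw [Finset.sum_congr rfl hb, Finset.sum_comm]
    rw [Finset.mul_sum]
    refine Finset.sum_congr rfl fun m _ => ?_
    rw [Finset.sum_comm, Finset.mul_sum]
    refine Finset.sum_congr rfl fun n _ => ?_
    rw [← Finset.mul_sum, csum hp (m - n)]
    have hcond : ((n : ZMod p) = (m : ZMod p)) ↔ (p:ℤ) ∣ (m - n) := by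
      rw [ZMod.intCast_eq_intCast_iff]
      constructor
      · intro h; exact Int.ModEq.dvd h
      · intro h; exact (Int.modEq_iff_dvd.mpr h)
    by_cases hc : (n : ZMod p) = (m : ZMod p)
    · rw [if_pos hc, if_pos (hcond.mp hc)]; ring
    · rw [if_neg hc, if_neg (fun hdd => hc (hcond.mpr hdd))]; ring
  have hR : (∑ h : ZMod p, (TTh S p h x * conj (TTh S p h x)))
      = ∑ m ∈ S, ∑ n ∈ S, (if ((n : ZMod p) = (m : ZMod p)) then K m n else 0) := by
    have hh : ∀ h : ZMod p, TTh S p h x * conj (TTh S p h x)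
        = ∑ m ∈ S, (if ((m : ZMod p) = h) then (∑ n ∈ S, if ((n : ZMod p) = h) then K m n else 0) else 0) := by
      intro h
      simp only [hK]
      unfold TTh
      rw [map_sum, Finset.sum_mul_sum, Finset.sum_filter]
      refine Finset.sum_congr rfl fun m _ => ?_
      by_cases hc : (m : ZMod p) = h
      · rw [if_pos hc, if_pos hc, Finset.sum_filter]
      · rw [if_neg hc, if_neg hc]
    rw [Finset.sum_congr rfl (fun h _ => hh h), Finset.sum_comm]
    refine Finset.sum_congr rfl fun m _ => ?_
    rw [Finset.sum_ite_eq Finset.univ ((m : ZMod p))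
      (fun h => (∑ n ∈ S, if ((n : ZMod p) = h) then K m n else 0)), if_pos (Finset.mem_univ _)]
  have hreL : (∑ b ∈ Finset.range p, ff S (x + (b:ℝ)/p))
      = (∑ b ∈ Finset.range p, (TT S (x + (b:ℝ)/p) * conj (TT S (x + (b:ℝ)/p)))).re := by
    rw [Complex.re_sum]
    exact Finset.sum_congr rfl fun b _ => norm_sq_re _
  have hreR : (∑ h : ZMod p, ‖TTh S p h x‖^2)
      = (∑ h : ZMod p, (TTh S p h x * conj (TTh S p h x))).re := by
    rw [Complex.re_sum]
    exact Finset.sum_congr rfl fun h _ => norm_sq_re _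
  rw [hreL, hreR, hL, hR]
  rw [show ((p:ℂ) * ∑ m ∈ S, ∑ n ∈ S, (if ((n : ZMod p) = (m : ZMod p)) then K m n else 0))
    = ((p:ℝ):ℂ) * ∑ m ∈ S, ∑ n ∈ S, (if ((n : ZMod p) = (m : ZMod p)) then K m n else 0) by norm_num]
  rw [Complex.re_ofReal_mul]

lemma csineq (S : Finset ℤ) {p : ℕ} [NeZero p] (hp : p.Prime) (x : ℝ) :
    ff S x ≤ ((S.image (fun n : ℤ => (n : ZMod p))).card : ℝ) * ∑ h : ZMod p, ‖TTh S p h x‖^2 := by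
  set Om := S.image (fun n : ℤ => (n : ZMod p)) with hOm
  have hdecomp : TT S x = ∑ h ∈ Om, TTh S p h x :=
    (Finset.sum_fiberwise_of_maps_to (fun n hn => Finset.mem_image_of_mem _ hn) _).symm
  have h1 : ‖TT S x‖ ≤ ∑ h ∈ Om, ‖TTh S p h x‖ := by
    rw [hdecomp]; exact norm_sum_le _ _
  have h2 : ‖TT S x‖^2 ≤ (∑ h ∈ Om, ‖TTh S p h x‖)^2 := by
    apply pow_le_pow_left₀ (norm_nonneg _) h1
  have h3 : (∑ h ∈ Om, ‖TTh S p h x‖)^2 ≤ (Om.card : ℝ) * ∑ h ∈ Om, ‖TTh S p h x‖^2 := by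
    have := Finset.sum_mul_sq_le_sq_mul_sq Om (fun _ => (1:ℝ)) (fun h => ‖TTh S p h x‖)
    simpa [Finset.sum_const, nsmul_eq_mul] using this
  have h4 : (∑ h ∈ Om, ‖TTh S p h x‖^2) ≤ ∑ h : ZMod p, ‖TTh S p h x‖^2 :=
    Finset.sum_le_sum_of_subset_of_nonneg (Finset.subset_univ _) (fun _ _ _ => by positivity)
  calc ff S x = ‖TT S x‖^2 := rfl
    _ ≤ (∑ h ∈ Om, ‖TTh S p h x‖)^2 := h2
    _ ≤ (Om.card : ℝ) * ∑ h ∈ Om, ‖TTh S p h x‖^2 := h3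
    _ ≤ (Om.card : ℝ) * ∑ h : ZMod p, ‖TTh S p h x‖^2 :=
        mul_le_mul_of_nonneg_left h4 (by positivity)

lemma star_ineq (S : Finset ℤ) {p : ℕ} [NeZero p] (hp : p.Prime) {σp : ℕ} (hσ : σp < p)
    (hcard : (S.image (fun n : ℤ => (n : ZMod p))).card = p - σp) (x : ℝ) :
    (σp:ℝ)/((p:ℝ) - σp) * ff S x ≤ ∑ b ∈ Finset.Icc 1 (p-1), ff S (x + (b:ℝ)/p) := by
  set ν : ℕ := p - σp with hν
  have hν0 : (0:ℝ) < (ν:ℝ) := by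
    have : 0 < ν := by omega
    exact_mod_cast this
  have hsumν : (σp:ℝ) + (ν:ℝ) = (p:ℝ) := by
    have : σp + ν = p := by omega
    exact_mod_cast this
  have hcastν : (p:ℝ) - (σp:ℝ) = (ν:ℝ) := by linarith
  set E := ∑ h : ZMod p, ‖TTh S p h x‖^2 with hE
  have hCS : ff S x ≤ (ν:ℝ) * E := by
    have h := csineq S hp x
    rw [hcard] at h
    exact h
  have hsB := sumB S hp x
  have hsplit : (∑ b ∈ Finset.range p, ff S (x + (b:ℝ)/p))
      = ff S x + ∑ b ∈ Finset.Icc 1 (p-1), ff S (x + (b:ℝ)/p) := by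
    have h0 : (0:ℕ) ∈ Finset.range p := by simp [hp.pos]
    rw [← Finset.add_sum_erase _ _ h0]
    congr 1
    · norm_num
    · apply Finset.sum_congr
      · ext b
        simp only [Finset.mem_erase, Finset.mem_Icc, Finset.mem_range]
        omega
      · intros; rfl
  have hE' : ff S x / (ν:ℝ) ≤ E := by
    rw [div_le_iff₀ hν0]
    linarith [hCS]
  have hkey : (σp:ℝ)/((p:ℝ) - σp) * ff S x = (p:ℝ) * (ff S x / ν) - ff S x := by
    rw [hcastν]
    field_simp
    linear_combination (ff S x) * hsumν
  have hpE : (p:ℝ) * (ff S x / ν) ≤ (p:ℝ) * E :=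
    mul_le_mul_of_nonneg_left hE' (by positivity)
  have : ff S x + (∑ b ∈ Finset.Icc 1 (p-1), ff S (x + (b:ℝ)/p)) = (p:ℝ) * E := by
    rw [← hsplit, hsB]
  rw [hkey]
  linarith

lemma ff_nonneg (S : Finset ℤ) (x : ℝ) : 0 ≤ ff S x := by
  show (0:ℝ) ≤ ‖TT S x‖^2
  positivity

lemma coprime_mod (x q : ℕ) (h : Nat.Coprime x q) : Nat.Coprime (x % q) q := by
  rwa [Nat.Coprime, ← Nat.gcd_rec, Nat.gcd_comm]

lemma mem_Aq_lt {a r : ℕ} (hr : 1 < r) (ha : a ∈ Aq r) : a < r := by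
  simp only [Aq, Finset.mem_filter, Finset.mem_Icc] at ha
  rcases Nat.lt_or_ge a r with h | h
  · exact h
  · exfalso
    have : a = r := le_antisymm ha.1.2 h
    rw [this] at ha
    simp [Nat.gcd_self] at ha
    omega

lemma inj_step (S : Finset ℤ) {p r : ℕ} (hp : p.Prime) (hr0 : 0 < r) (hpr : ¬ p ∣ r) :
    (∑ a ∈ Aq r, ∑ b ∈ Finset.Icc 1 (p-1), ff S ((a:ℝ)/r + (b:ℝ)/p))
      ≤ ∑ c ∈ Aq (p*r), ff S ((c:ℝ)/(p*r)) := by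
  have hcop : Nat.Coprime p r := (hp.coprime_iff_not_dvd).mpr hpr
  set q := p * r with hq
  have hq0 : 0 < q := Nat.mul_pos hp.pos hr0
  have hq1 : 1 < q := by
    have := hp.two_le
    calc 1 < p := hp.one_lt
      _ = p * 1 := (mul_one p).symm
      _ ≤ p * r := Nat.mul_le_mul_left p hr0
  set φ : ℕ × ℕ → ℕ := fun ab => (ab.1 * p + ab.2 * r) % q with hφ
  have hmems : ∀ ab ∈ (Aq r) ×ˢ (Finset.Icc 1 (p-1)), φ ab ∈ Aq q := by
    rintro ⟨a, b⟩ hab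
    rw [Finset.mem_product] at hab
    obtain ⟨ha, hb⟩ := hab
    simp only [Aq, Finset.mem_filter, Finset.mem_Icc] at ha ⊢
    rw [Finset.mem_Icc] at hb
    have hbp : b < p := by
      have := hp.two_le
      omega
    have hco1 : Nat.Coprime (a*p + b*r) p := by
      rw [Nat.coprime_comm]
      refine (hp.coprime_iff_not_dvd).mpr ?_
      intro hdvd
      have h1 : p ∣ a * p := Dvd.intro_left a rfl
      have h2 : p ∣ b * r := (Nat.dvd_add_right h1).mp hdvd
      rcases (Nat.Prime.dvd_mul hp).mp h2 with h | h
      · have := Nat.le_of_dvd (by omega) h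
        omega
      · exact hpr h
    have hco2 : Nat.Coprime (a*p + b*r) r := by
      rw [Nat.coprime_add_mul_right_left]
      exact Nat.Coprime.mul ha.2 hcop
    have hco : Nat.Coprime (a*p + b*r) q := Nat.Coprime.mul_right hco1 hco2
    have hcoφ : Nat.Coprime (φ (a,b)) q := coprime_mod _ _ hco
    refine ⟨⟨?_, ?_⟩, hcoφ⟩
    · rcases Nat.eq_zero_or_pos (φ (a,b)) with h | h
      · exfalso
        rw [h] at hcoφ
        simp [Nat.Coprime] at hcoφ
        omega
      · exact h
    · exact le_of_lt (Nat.mod_lt _ hq0)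
  have hval : ∀ ab ∈ (Aq r) ×ˢ (Finset.Icc 1 (p-1)),
      ff S ((ab.1:ℝ)/r + (ab.2:ℝ)/p) = ff S ((φ ab : ℝ)/q) := by
    rintro ⟨a, b⟩ hab
    rw [Finset.mem_product] at hab
    have hm : a * p + b * r = q * ((a*p+b*r)/q) + φ (a,b) := (Nat.div_add_mod _ _).symm
    have hcast : (a:ℝ)/r + (b:ℝ)/p = ((φ (a,b) : ℝ))/q + (((a*p+b*r)/q : ℕ) : ℝ) := by
      have hpne : (p:ℝ) ≠ 0 := by exact_mod_cast hp.pos.ne'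
      have hrne : (r:ℝ) ≠ 0 := by exact_mod_cast hr0.ne'
      have hqne : (q:ℝ) ≠ 0 := by exact_mod_cast hq0.ne'
      have h1 : ((a * p + b * r : ℕ) : ℝ) = (q:ℝ) * (((a*p+b*r)/q : ℕ) : ℝ) + (φ (a,b) : ℝ) := by
        exact_mod_cast congrArg (fun t : ℕ => (t:ℝ)) hm
      have hqr : (q:ℝ) = (p:ℝ) * (r:ℝ) := by rw [hq]; push_cast; ring
      have h2 : (a:ℝ)/r + (b:ℝ)/p = ((a * p + b * r : ℕ) : ℝ)/q := by
        push_cast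
        rw [hqr, div_add_div _ _ hrne hpne]
        ring
      rw [h2, h1]
      rw [add_div, mul_comm (q:ℝ), mul_div_assoc, div_self hqne, mul_one, add_comm]
    rw [hcast]
    show ff S _ = ff S _
    unfold ff
    congr 1
    have : (((a*p+b*r)/q : ℕ) : ℝ) = (((((a*p+b*r)/q : ℕ) : ℤ)) : ℝ) := by push_cast; rfl
    rw [this, TT_int_add]
  have hinj : ∀ x ∈ (Aq r) ×ˢ (Finset.Icc 1 (p-1)), ∀ y ∈ (Aq r) ×ˢ (Finset.Icc 1 (p-1)),
      φ x = φ y → x = y := by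
    rintro ⟨a, b⟩ hab ⟨a', b'⟩ hab' heq
    rw [Finset.mem_product] at hab hab'
    obtain ⟨ha, hb⟩ := hab
    obtain ⟨ha', hb'⟩ := hab'
    rw [Finset.mem_Icc] at hb hb'
    have hihb : 1 ≤ a := by simp only [Aq, Finset.mem_filter, Finset.mem_Icc] at ha; exact ha.1.1
    have hihb' : 1 ≤ a' := by simp only [Aq, Finset.mem_filter, Finset.mem_Icc] at ha'; exact ha'.1.1
    have hrdvd : r ∣ q := ⟨p, by rw [hq, mul_comm]⟩
    have hpdvd : p ∣ q := ⟨r, hq⟩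
    have hφeq : (a * p + b * r) % q = (a' * p + b' * r) % q := heq
    -- mod r
    have hmr : (a * p) % r = (a' * p) % r := by
      have e1 : (a * p + b * r) % r = (a * p) % r := Nat.add_mul_mod_self_right _ _ _
      have e2 : (a' * p + b' * r) % r = (a' * p) % r := Nat.add_mul_mod_self_right _ _ _
      have e3 : (a * p + b * r) % q % r = (a' * p + b' * r) % q % r := by rw [hφeq]
      rwa [Nat.mod_mod_of_dvd _ hrdvd, Nat.mod_mod_of_dvd _ hrdvd, e1, e2] at e3
    have haa : a ≡ a' [MOD r] :=
      Nat.ModEq.cancel_right_of_coprime (by rw [Nat.gcd_comm]; exact hcop) hmr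
    -- mod p
    have hmp : (b * r) % p = (b' * r) % p := by
      have e1 : (b * r + a * p) % p = (b * r) % p := Nat.add_mul_mod_self_right _ _ _
      have e2 : (b' * r + a' * p) % p = (b' * r) % p := Nat.add_mul_mod_self_right _ _ _
      have e3 : (a * p + b * r) % q % p = (a' * p + b' * r) % q % p := by rw [hφeq]
      rw [Nat.mod_mod_of_dvd _ hpdvd, Nat.mod_mod_of_dvd _ hpdvd] at e3
      rw [add_comm (a*p) (b*r), add_comm (a'*p) (b'*r)] at e3
      rwa [e1, e2] at e3
    have hbb : b ≡ b' [MOD p] := Nat.ModEq.cancel_right_of_coprime hcop hmp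
    have hbeq : b = b' := by
      apply Nat.ModEq.eq_of_lt_of_lt hbb <;> (have := hp.two_le; omega)
    have haeq : a = a' := by
      rcases Nat.lt_or_ge 1 r with hr1 | hr1
      · exact Nat.ModEq.eq_of_lt_of_lt haa (mem_Aq_lt hr1 ha) (mem_Aq_lt hr1 ha')
      · have hre : r = 1 := by omega
        simp only [Aq, Finset.mem_filter, Finset.mem_Icc, hre] at ha ha'
        omega
    rw [Prod.mk.injEq]
    exact ⟨haeq, hbeq⟩
  calc (∑ a ∈ Aq r, ∑ b ∈ Finset.Icc 1 (p-1), ff S ((a:ℝ)/r + (b:ℝ)/p))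
      = ∑ ab ∈ (Aq r) ×ˢ (Finset.Icc 1 (p-1)), ff S ((ab.1:ℝ)/r + (ab.2:ℝ)/p) :=
        (Finset.sum_product' _ _ _).symm
    _ = ∑ ab ∈ (Aq r) ×ˢ (Finset.Icc 1 (p-1)), ff S ((φ ab : ℝ)/q) :=
        Finset.sum_congr rfl hval
    _ = ∑ c ∈ ((Aq r) ×ˢ (Finset.Icc 1 (p-1))).image φ, ff S ((c:ℝ)/q) :=
        (Finset.sum_image (g := φ) (f := fun c : ℕ => ff S ((c:ℝ)/q)) hinj).symm
    _ ≤ ∑ c ∈ Aq q, ff S ((c:ℝ)/q) := by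
        apply Finset.sum_le_sum_of_subset_of_nonneg
        · intro c hc
          obtain ⟨ab, hab, hab2⟩ := Finset.mem_image.mp hc
          exact hab2 ▸ hmems ab hab
        · exact fun c _ _ => ff_nonneg S _
    _ = ∑ c ∈ Aq (p*r), ff S ((c:ℝ)/((p:ℝ)*(r:ℝ))) := by
        refine Finset.sum_congr (by rw [hq]) fun c _ => ?_
        rw [hq, Nat.cast_mul]

lemma Wq_lower (S : Finset ℤ) (sig : ℕ → ℕ) :
    ∀ q : ℕ, 0 < q → Squarefree q →
    (∀ p ∈ q.primeFactors, sig p < p ∧ (S.image (fun n : ℤ => (n : ZMod p))).card = p - sig p) →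
    (S.card:ℝ)^2 * ∏ p ∈ q.primeFactors, (sig p : ℝ)/((p:ℝ) - sig p)
      ≤ ∑ a ∈ Aq q, ff S ((a:ℝ)/q) := by
  intro q
  induction q using Nat.strong_induction_on with
  | _ q ih =>
  intro hq0 hsq hsig
  by_cases hq1 : q = 1
  · subst hq1
    have hAq : Aq 1 = {1} := by
      ext a
      simp only [Aq, Finset.mem_filter, Finset.mem_Icc, Finset.mem_singleton]
      constructor
      · rintro ⟨⟨h1, h2⟩, _⟩; omega
      · rintro rfl; exact ⟨⟨le_rfl, le_rfl⟩, Nat.gcd_self 1⟩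
    rw [hAq, Finset.sum_singleton, Nat.primeFactors_one, Finset.prod_empty, mul_one]
    have h11 : ((1:ℕ):ℝ)/((1:ℕ):ℝ) = ((1:ℤ):ℝ) := by norm_num
    rw [h11]
    have hTT1 : TT S ((1:ℤ):ℝ) = (S.card : ℂ) := by
      unfold TT
      rw [Finset.sum_congr rfl (fun n _ => ee_int n 1)]
      simp
    have hff1 : ff S ((1:ℤ):ℝ) = (S.card:ℝ)^2 := by
      unfold ff
      rw [hTT1]
      simp [Complex.norm_natCast]
    rw [hff1]
  · have hq1' : 1 < q := by omega
    set p := q.minFac with hpdef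
    have hp : p.Prime := Nat.minFac_prime hq1
    haveI : NeZero p := ⟨hp.pos.ne'⟩
    have hpq : p ∣ q := Nat.minFac_dvd q
    set r := q / p with hrdef
    have hqpr : q = p * r := (Nat.mul_div_cancel' hpq).symm
    have hr0 : 0 < r := by
      rcases Nat.eq_zero_or_pos r with h | h
      · rw [h, mul_zero] at hqpr; omega
      · exact h
    have hrq : r < q := Nat.div_lt_self hq0 hp.one_lt
    have hrdvd : r ∣ q := ⟨p, by rw [hqpr]; ring⟩
    have hrs : Squarefree r := Squarefree.squarefree_of_dvd hrdvd hsq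
    have hpr : ¬ p ∣ r := by
      intro h
      obtain ⟨t, ht⟩ := h
      have hsq' := hsq p ⟨t, by rw [hqpr, ht]; ring⟩
      have := Nat.isUnit_iff.mp hsq'
      have := hp.one_lt
      omega
    have hcop : Nat.Coprime p r := (hp.coprime_iff_not_dvd).mpr hpr
    have hpfq : q.primeFactors = insert p r.primeFactors := by
      rw [hqpr, Nat.primeFactors_mul hp.pos.ne' hr0.ne', hp.primeFactors, ← Finset.insert_eq]
    have hpnotin : p ∉ r.primeFactors := fun h => hpr (Nat.dvd_of_mem_primeFactors h)
    have hprod : (∏ p' ∈ q.primeFactors, (sig p' : ℝ)/((p':ℝ) - sig p'))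
        = ((sig p : ℝ)/((p:ℝ) - sig p)) * ∏ p' ∈ r.primeFactors, (sig p' : ℝ)/((p':ℝ) - sig p') := by
      rw [hpfq, Finset.prod_insert hpnotin]
    have hsig_p := hsig p (by rw [hpfq]; exact Finset.mem_insert_self _ _)
    have hsig_r : ∀ p' ∈ r.primeFactors, sig p' < p' ∧
        (S.image (fun n : ℤ => (n : ZMod p'))).card = p' - sig p' :=
      fun p' h => hsig p' (by rw [hpfq]; exact Finset.mem_insert_of_mem h)
    have IH := ih r hrq hr0 hrs hsig_r
    have hg0 : (0:ℝ) ≤ (sig p : ℝ)/((p:ℝ) - sig p) := by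
      have h1 : (sig p : ℝ) < (p:ℝ) := by exact_mod_cast hsig_p.1
      have h2 : (0:ℝ) ≤ (sig p : ℝ) := by positivity
      apply div_nonneg h2
      linarith
    calc (S.card:ℝ)^2 * ∏ p' ∈ q.primeFactors, (sig p' : ℝ)/((p':ℝ) - sig p')
        = ((sig p : ℝ)/((p:ℝ) - sig p)) *
            ((S.card:ℝ)^2 * ∏ p' ∈ r.primeFactors, (sig p' : ℝ)/((p':ℝ) - sig p')) := by
          rw [hprod]; ring
      _ ≤ ((sig p : ℝ)/((p:ℝ) - sig p)) * ∑ a ∈ Aq r, ff S ((a:ℝ)/r) :=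
          mul_le_mul_of_nonneg_left IH hg0
      _ = ∑ a ∈ Aq r, ((sig p : ℝ)/((p:ℝ) - sig p)) * ff S ((a:ℝ)/r) := Finset.mul_sum _ _ _
      _ ≤ ∑ a ∈ Aq r, ∑ b ∈ Finset.Icc 1 (p-1), ff S ((a:ℝ)/r + (b:ℝ)/p) :=
          Finset.sum_le_sum (fun a _ => star_ineq S hp hsig_p.1 hsig_p.2 ((a:ℝ)/r))
      _ ≤ ∑ c ∈ Aq (p*r), ff S ((c:ℝ)/((p:ℝ)*(r:ℝ))) := inj_step S hp hr0 hpr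
      _ = ∑ a ∈ Aq q, ff S ((a:ℝ)/q) := by
          refine Finset.sum_congr (by rw [← hqpr]) fun c _ => ?_
          rw [hqpr, Nat.cast_mul]


end
end MLSAux



theorem montgomery_large_sieve :
    ∃ C : ℝ, 0 < C ∧
      ∀ (z N : ℝ), 1 ≤ z → 1 ≤ N →
      ∀ (S : Finset ℤ) (sig : ℕ → ℕ),
        (∀ n ∈ S, 1 ≤ n ∧ (n : ℝ) ≤ N) →
        (∀ p : ℕ, p.Prime → (p : ℝ) ≤ z →
          sig p < p ∧ (S.image (fun n : ℤ => (n : ZMod p))).card = p - sig p) →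
        (S.card : ℝ) ≤ C * (N + z ^ 2) /
          (∑ n ∈ Finset.Icc 1 ⌊z⌋₊,
            ((moebius n).natAbs : ℝ) *
              ∏ p ∈ n.primeFactors, (sig p : ℝ) / ((p : ℝ) - sig p)) := by
  refine ⟨44, by norm_num, ?_⟩
  intro z N hz hN S sig hS hsig
  set Q := ⌊z⌋₊ with hQdef
  have hQ1 : 1 ≤ Q := Nat.le_floor (by exact_mod_cast hz)
  have hQz : (Q:ℝ) ≤ z := Nat.floor_le (by linarith)
  set G := (∑ n ∈ Finset.Icc 1 Q,
      ((moebius n).natAbs : ℝ) * ∏ p ∈ n.primeFactors, (sig p : ℝ) / ((p : ℝ) - sig p)) with hG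
  -- each prime factor of n ≤ Q satisfies hypotheses
  have hple : ∀ n ∈ Finset.Icc 1 Q, ∀ p ∈ n.primeFactors,
      sig p < p ∧ (S.image (fun m : ℤ => (m : ZMod p))).card = p - sig p := by
    intro n hn p hp
    rw [Finset.mem_Icc] at hn
    have hpp : p.Prime := Nat.prime_of_mem_primeFactors hp
    have hdvd : p ∣ n := Nat.dvd_of_mem_primeFactors hp
    have hpn : p ≤ n := Nat.le_of_dvd (by omega) hdvd
    have hpz : (p:ℝ) ≤ z := by
      have h1 : (p:ℝ) ≤ (Q:ℝ) := by exact_mod_cast le_trans hpn hn.2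
      linarith
    exact hsig p hpp hpz
  have hterm_nonneg : ∀ n ∈ Finset.Icc 1 Q,
      0 ≤ ((moebius n).natAbs : ℝ) * ∏ p ∈ n.primeFactors, (sig p : ℝ) / ((p : ℝ) - sig p) := by
    intro n hn
    apply mul_nonneg (by positivity)
    apply Finset.prod_nonneg
    intro p hp
    have h1 := (hple n hn p hp).1
    have h2 : (sig p : ℝ) < (p:ℝ) := by exact_mod_cast h1
    apply div_nonneg (by positivity)
    linarith
  have hG1 : (1:ℝ) ≤ G := by
    rw [hG]
    have h1 : ({1} : Finset ℕ) ⊆ Finset.Icc 1 Q := by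
      intro t ht
      rw [Finset.mem_singleton] at ht
      rw [Finset.mem_Icc, ht]
      omega
    calc (1:ℝ) = ∑ n ∈ ({1} : Finset ℕ),
          ((moebius n).natAbs : ℝ) * ∏ p ∈ n.primeFactors, (sig p : ℝ) / ((p : ℝ) - sig p) := by
          simp
      _ ≤ _ := Finset.sum_le_sum_of_subset_of_nonneg h1 (fun n hn _ => hterm_nonneg n hn)
  have hG0 : (0:ℝ) < G := by linarith
  -- Step B
  have hB : (S.card:ℝ)^2 * G ≤ ∑ q ∈ Finset.Icc 1 Q, ∑ a ∈ Aq q, ff S ((a:ℝ)/q) := by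
    rw [hG, Finset.mul_sum]
    apply Finset.sum_le_sum
    intro q hq
    rw [Finset.mem_Icc] at hq
    by_cases hsq : Squarefree q
    · have hmu : (((moebius q).natAbs : ℕ) : ℝ) = 1 := by
        rw [ArithmeticFunction.moebius_apply_of_squarefree hsq]
        simp [Int.natAbs_pow]
      rw [hmu, one_mul]
      exact Wq_lower S sig q (by omega) hsq (hple q (Finset.mem_Icc.mpr hq))
    · rw [ArithmeticFunction.moebius_eq_zero_of_not_squarefree hsq]
      simp only [Int.natAbs_zero, Nat.cast_zero, zero_mul, mul_zero]
      exact Finset.sum_nonneg (fun a _ => ff_nonneg S _)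
  have hA := stepA S N z hN hz hS
  have hπ : Real.pi ≤ 3.15 := by linarith [Real.pi_lt_d2]
  have hchain : (S.card:ℝ)^2 * G ≤ 44 * (N + z^2) * S.card := by
    calc (S.card:ℝ)^2 * G ≤ (6 * ((Q:ℝ))^2 + 12 * Real.pi * N) * S.card := le_trans hB hA
      _ ≤ 44 * (N + z^2) * S.card := by
        have hc : 6 * ((Q:ℝ))^2 + 12 * Real.pi * N ≤ 44 * (N + z^2) := by
          have h1 : ((Q:ℝ))^2 ≤ z^2 := by nlinarith
          nlinarith [Real.pi_pos]
        have : (0:ℝ) ≤ S.card := by positivity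
        exact mul_le_mul_of_nonneg_right hc this
  rcases Nat.eq_zero_or_pos S.card with hZ | hZ
  · rw [hZ]
    push_cast
    positivity
  · have hZ0 : (0:ℝ) < S.card := by exact_mod_cast hZ
    rw [le_div_iff₀ hG0]
    apply le_of_mul_le_mul_right _ hZ0
    calc (S.card:ℝ) * G * S.card = (S.card:ℝ)^2 * G := by ring
      _ ≤ 44 * (N + z^2) * S.card := hchain
end
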